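/- arXiv:1512.07478 — 4 statements merged into one kernel-verified Lean document; each statement's English description precedes it below -/
import Mathlib

section
/- A mapping f : X → Y between topological spaces is quasi-continuous (i.e., for every point x, every neighborhood U of x and every neighborhood V of f(x), there exists a nonempty open set G ⊆ U with f(G) ⊆ V) if and only if for every nonempty open set G ⊆ X and every set A that is dense in G, we have f(G) ⊆ closure(f(A)). -/
open Topology

/-- A map is quasi-continuous at `x₀` if every neighborhood of `x₀` contains a nonempty open
set mapped into any prescribed neighborhood of `f x₀`. -/
def QuasiContinuousAt {X Y : Type*} [TopologicalSpace X] [TopologicalSpace Y]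
    (f : X → Y) (x₀ : X) : Prop :=
  ∀ U ∈ 𝓝 x₀, ∀ V ∈ 𝓝 (f x₀), ∃ G : Set X, IsOpen G ∧ G.Nonempty ∧ G ⊆ U ∧ f '' G ⊆ V

/-- A map is quasi-continuous if it is quasi-continuous at every point. -/
def QuasiContinuous {X Y : Type*} [TopologicalSpace X] [TopologicalSpace Y]
    (f : X → Y) : Prop :=
  ∀ x : X, QuasiContinuousAt f x

/-- `f : X × Y → Z` has the Namioka property if there is a dense `Gδ` set `A ⊆ X` such that
`f` is jointly continuous at every point of `A × Y`. -/
def NamiokaProperty {X Y Z : Type*} [TopologicalSpace X] [TopologicalSpace Y]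
    [TopologicalSpace Z] (f : X × Y → Z) : Prop :=
  ∃ A : Set X, Dense A ∧ IsGδ A ∧ ∀ x ∈ A, ∀ y : Y, ContinuousAt f (x, y)

/-- `Y` is a Kempisty space if for every Baire space `X`, every `f : X × Y → ℝ`
quasi-continuous in the first variable and continuous in the second has the Namioka property. -/
def KempistySpace (Y : Type*) [TopologicalSpace Y] : Prop :=
  ∀ (X : Type*) (_ : TopologicalSpace X), BaireSpace X →
    ∀ f : X × Y → ℝ,
      (∀ y : Y, QuasiContinuous fun x => f (x, y)) →
      (∀ x : X, Continuous fun y => f (x, y)) →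
      NamiokaProperty f

/-- `f` is quasi-continuous iff for every nonempty open `G` and every set `A`
dense in `G`, `f '' G ⊆ closure (f '' A)`. -/
theorem quasiContinuous_iff_forall_open_dense {X Y : Type*}
    [TopologicalSpace X] [TopologicalSpace Y] (f : X → Y) :
    QuasiContinuous f ↔
      ∀ G : Set X, IsOpen G → G.Nonempty →
        ∀ A : Set X, A ⊆ G → G ⊆ closure A → f '' G ⊆ closure (f '' A) := by
  constructor
  · intro hqc G hGo hGne A hAG hGA
    rintro _ ⟨x, hxG, rfl⟩
    rw [mem_closure_iff]
    intro V hVo hfxV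
    obtain ⟨G', hG'o, hG'ne, hG'G, hfG'⟩ :=
      hqc x G (hGo.mem_nhds hxG) V (hVo.mem_nhds hfxV)
    obtain ⟨a, haG', haA⟩ : (G' ∩ A).Nonempty := by
      obtain ⟨z, hz⟩ := hG'ne
      have hzclA : z ∈ closure A := hGA (hG'G hz)
      exact mem_closure_iff.mp hzclA G' hG'o hz
    exact ⟨f a, hfG' ⟨a, haG', rfl⟩, ⟨a, haA, rfl⟩⟩
  · intro h x U hU V hV
    obtain ⟨W, hWU, hWo, hxW⟩ := mem_nhds_iff.mp hU
    obtain ⟨V', hV'V, hV'o, hfxV'⟩ := mem_nhds_iff.mp hV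
    by_contra hcon
    push_neg at hcon
    set B : Set X := W \ f ⁻¹' V' with hB
    have hBdense : W ⊆ closure B := by
      by_contra hnd
      obtain ⟨w, hwW, hwncl⟩ : ∃ w, w ∈ W ∧ w ∉ closure B := by
        simpa [Set.subset_def] using hnd
      set G := W \ closure B with hG
      have hGo : IsOpen G := hWo.sdiff isClosed_closure
      have hGne : G.Nonempty := ⟨w, hwW, hwncl⟩
      have hGW : G ⊆ W := Set.diff_subset
      have hfG : f '' G ⊆ V := by
        rintro _ ⟨z, hzG, rfl⟩
        apply hV'V
        by_contra hzV'
        exact hzG.2 (subset_closure ⟨hzG.1, hzV'⟩)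
      exact (hcon G hGo hGne (hGW.trans hWU)) hfG
    have := h W hWo ⟨x, hxW⟩ B Set.diff_subset hBdense ⟨x, hxW, rfl⟩
    rw [mem_closure_iff] at this
    obtain ⟨_, hyV', b, hbB, rfl⟩ := this V' hV'o hfxV'
    exact hbB.2 hyV'
end

section
/- Let T be a set, (X_t : t ∈ T) a family of compact spaces, X a compact subspace of the product ∏_{t∈T} X_t, f : X → ℝ a continuous map, and ε > 0. Then there exists a finite subset T₀ ⊆ T such that |f(x') − f(x'')| < ε whenever x', x'' ∈ X agree on all coordinates in T₀. -/
/-- a continuous real function on a compact subset of a product depends,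
up to `ε`, on finitely many coordinates. -/
theorem exists_finset_coords_of_continuousOn {T : Type*} {Xt : T → Type*}
    [∀ t, TopologicalSpace (Xt t)] [∀ t, CompactSpace (Xt t)]
    (X : Set (∀ t, Xt t)) (hX : IsCompact X)
    (f : (∀ t, Xt t) → ℝ) (hf : ContinuousOn f X)
    (ε : ℝ) (hε : 0 < ε) :
    ∃ T₀ : Finset T, ∀ x' ∈ X, ∀ x'' ∈ X,
      (∀ t ∈ T₀, x' t = x'' t) → |f x' - f x''| < ε := by
  classical
  have key : ∀ x : (∀ t, Xt t), ∃ (I : Finset T) (u : ∀ t, Set (Xt t)),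
      x ∈ X → ((∀ t ∈ I, IsOpen (u t)) ∧ (∀ t ∈ I, x t ∈ u t) ∧
        ∀ y ∈ (↑I : Set T).pi u ∩ X, |f y - f x| < ε / 2) := by
    intro x
    by_cases hx : x ∈ X
    · have h1 : {y | |f y - f x| < ε / 2} ∈ nhdsWithin x X := by
        have := hf x hx (@Metric.ball_mem_nhds _ _ (f x) (ε / 2) (half_pos hε))
        refine Filter.mem_of_superset this ?_
        intro y hy
        simpa [Real.dist_eq] using hy
      obtain ⟨U, hUopen, hxU, hUsub⟩ := mem_nhdsWithin.mp h1
      obtain ⟨I, u, hu, hsub⟩ := (isOpen_pi_iff.mp hUopen) x hxU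
      refine ⟨I, u, fun _ => ⟨fun t ht => (hu t ht).1, fun t ht => (hu t ht).2, ?_⟩⟩
      intro y hy
      exact hUsub ⟨hsub hy.1, hy.2⟩
    · exact ⟨∅, fun _ => ∅, fun h => absurd h hx⟩
  choose I u hu using key
  set V : (∀ t, Xt t) → Set (∀ t, Xt t) := fun x => (↑(I x) : Set T).pi (u x) with hV
  obtain ⟨s, hsX, hcov⟩ := hX.elim_nhds_subcover V (fun x hx => by
    have h := hu x hx
    exact (isOpen_set_pi (I x).finite_toSet (fun t ht => h.1 t ht)).mem_nhds
      (fun t ht => h.2.1 t ht))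
  refine ⟨s.biUnion I, ?_⟩
  intro x' hx' x'' hx'' hagree
  obtain ⟨x, hxs, hx'V⟩ := Set.mem_iUnion₂.mp (hcov hx')
  have hxX : x ∈ X := hsX x hxs
  have h := hu x hxX
  have hx''V : x'' ∈ V x := by
    intro t ht
    have hteq : x' t = x'' t := hagree t (Finset.mem_biUnion.mpr ⟨x, hxs, ht⟩)
    rw [← hteq]
    exact hx'V t ht
  have h1 : |f x' - f x| < ε / 2 := h.2.2 x' ⟨hx'V, hx'⟩
  have h2 : |f x'' - f x| < ε / 2 := h.2.2 x'' ⟨hx''V, hx''⟩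
  calc |f x' - f x''| ≤ |f x' - f x| + |f x'' - f x| := by
        rw [abs_sub_comm (f x'') (f x)]; exact abs_sub_le _ _ _
    _ < ε := by linarith
end

section
/- Let X be a Baire space, Y ⊆ [0,1]^T a compact subspace, Σ = {x ∈ [0,1]^T : the support {t : x(t) ≠ 0} is countable}, and f : X × Y → ℝ a function continuous in the second variable. Suppose B ⊆ Y ∩ Σ is dense in Y and for every b ∈ B the function x ↦ f(x,b) is quasi-continuous on X. Then there exists a dense G_δ subset A ⊆ X such that f is jointly continuous at every point of A × Y. -/
open Topology

namespace NamProof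

open Topology Filter Set

variable {T : Type*}

/-- truncation of a function to a coordinate set -/
noncomputable def truncf (S : Set T) (y : T → ℝ) : T → ℝ := by
  classical exact fun t => if t ∈ S then y t else 0

lemma truncf_mem {S : Set T} {y : T → ℝ} {t : T} (ht : t ∈ S) : truncf S y t = y t := by
  classical simp [truncf, ht]

lemma truncf_not_mem {S : Set T} {y : T → ℝ} {t : T} (ht : t ∉ S) : truncf S y t = 0 := by
  classical simp [truncf, ht]

/-- the set enumerated by `e : ℕ → Option T` -/
def SOf (e : ℕ → Option T) : Set T := {t | ∃ i, e i = some t}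

lemma SOf_countable (e : ℕ → Option T) : (SOf e).Countable := by
  have : SOf e = ⋃ i : ℕ, {t | e i = some t} := by
    ext t; simp [SOf]
  rw [this]
  exact Set.countable_iUnion fun i =>
    Set.Subsingleton.countable (fun a ha b hb => by
      simp only [mem_setOf_eq] at ha hb
      have := ha ▸ hb; exact Option.some_injective _ (ha.symm.trans hb) )

lemma exists_enum {S : Set T} (hS : S.Countable) : ∃ e : ℕ → Option T, SOf e = S := by
  rcases S.eq_empty_or_nonempty with h | h
  · exact ⟨fun _ => none, by ext t; simp [SOf, h]⟩
  · obtain ⟨g, hg⟩ := hS.exists_eq_range h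
    refine ⟨fun i => some (g i), ?_⟩
    ext t; simp [SOf, hg, eq_comm]

/-- finite initial segments -/
def Fk (e : ℕ → Option T) (k : ℕ) : Set T := {t | ∃ i ≤ k, e i = some t}

lemma Fk_finite (e : ℕ → Option T) (k : ℕ) : (Fk e k).Finite := by
  have : Fk e k ⊆ ⋃ i ∈ Finset.range (k+1), {t | e i = some t} := by
    intro t ⟨i, hik, hi⟩
    exact Set.mem_biUnion (Finset.mem_range.2 (Nat.lt_succ_of_le hik)) hi
  refine Set.Finite.subset (Set.Finite.biUnion (Finset.range (k+1)).finite_toSet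
    (fun i _ => Set.Subsingleton.finite ?_)) this
  intro a ha b hb
  exact Option.some_injective _ (ha.symm.trans hb)

lemma Fk_subset_SOf (e : ℕ → Option T) (k : ℕ) : Fk e k ⊆ SOf e :=
  fun t ⟨i, _, hi⟩ => ⟨i, hi⟩

lemma exists_Fk_superset {e : ℕ → Option T} {I : Set T} (hI : I.Finite) (hIS : I ⊆ SOf e) :
    ∃ k, I ⊆ Fk e k := by
  classical
  have : ∀ t : I, ∃ i, e i = some t := fun t => hIS t.2
  choose ind hind using this
  haveI := hI.fintype
  rcases isEmpty_or_nonempty I with hE | hNE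
  · exact ⟨0, fun t ht => (hE.false ⟨t, ht⟩).elim⟩
  · refine ⟨Finset.univ.sup (fun t : I => ind t), fun t ht => ?_⟩
    exact ⟨ind ⟨t, ht⟩, Finset.le_sup (Finset.mem_univ _), hind ⟨t, ht⟩⟩


variable {T : Type*} {Y : Set (T → ℝ)}

/-- coordinate evaluation on the subtype is continuous -/
lemma continuous_coord (t : T) : Continuous (fun z : ↥Y => (z : T → ℝ) t) :=
  (continuous_apply t).comp continuous_subtype_val

lemma isOpen_basic (w : T → ℝ) {I : Set T} (hI : I.Finite) (γ : ℝ) :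
    IsOpen {z' : ↥Y | ∀ t ∈ I, |(z' : T → ℝ) t - w t| < γ} := by
  have : {z' : ↥Y | ∀ t ∈ I, |(z' : T → ℝ) t - w t| < γ}
      = ⋂ t ∈ I, {z' : ↥Y | |(z' : T → ℝ) t - w t| < γ} := by
    ext z'; simp
  rw [this]
  refine hI.isOpen_biInter fun t _ => ?_
  have hc : Continuous fun z' : ↥Y => |(z' : T → ℝ) t - w t| :=
    ((continuous_coord t).sub continuous_const).abs
  exact isOpen_lt hc continuous_const

/-- every neighborhood of a point of `↥Y` contains a basic finite-coordinate neighborhood -/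
lemma exists_basic_nhd (z : ↥Y) {O : Set ↥Y} (hO : O ∈ 𝓝 z) :
    ∃ (I : Finset T) (γ : ℝ), 0 < γ ∧
      {z' : ↥Y | ∀ t ∈ I, |(z' : T → ℝ) t - (z : T → ℝ) t| < γ} ⊆ O := by
  classical
  rw [mem_nhds_subtype] at hO
  obtain ⟨u, hu, hsub⟩ := hO
  rw [nhds_pi, Filter.mem_pi'] at hu
  obtain ⟨I, V, hV, hVu⟩ := hu
  have : ∀ i : T, ∃ ε : ℝ, 0 < ε ∧ (i ∈ I → Metric.ball ((z : T → ℝ) i) ε ⊆ V i) := by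
    intro i
    by_cases hi : i ∈ I
    · obtain ⟨ε, hε, hb⟩ := Metric.mem_nhds_iff.1 (hV i)
      exact ⟨ε, hε, fun _ => hb⟩
    · exact ⟨1, one_pos, fun h => absurd h hi⟩
  choose g hg0 hgb using this
  by_cases hne : I.Nonempty
  · refine ⟨I, I.inf' hne g, ?_, ?_⟩
    · exact (Finset.lt_inf'_iff hne).2 fun b _ => hg0 b
    · intro z' hz'
      apply hsub
      apply hVu
      intro i hi
      have h1 : |(z' : T → ℝ) i - (z : T → ℝ) i| < g i :=
        lt_of_lt_of_le (hz' i hi) (Finset.inf'_le _ hi)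
      exact hgb i hi (by rw [Metric.mem_ball, Real.dist_eq]; exact h1)
  · refine ⟨I, 1, one_pos, ?_⟩
    intro z' _
    apply hsub; apply hVu
    intro i hi; exact absurd ⟨i, hi⟩ hne

/-- if `z` is in the closure of `D` then any basic condition + any open condition can be met -/
lemma closure_meets {D : Set ↥Y} {z : ↥Y} (hz : z ∈ closure D) {O : Set ↥Y}
    (hOopen : IsOpen O) (hzO : z ∈ O) : ∃ d ∈ D, d ∈ O :=
  let ⟨d, hd1, hd2⟩ := _root_.mem_closure_iff.1 hz O hOopen hzO
  ⟨d, hd2, hd1⟩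

/-- the compact set of elements supported in `S` -/
def KS (Y : Set (T → ℝ)) (S : Set T) : Set ↥Y := {z | ∀ t ∉ S, (z : T → ℝ) t = 0}

lemma isClosed_KS (S : Set T) : IsClosed (KS Y S) := by
  have : KS Y S = ⋂ t ∈ {t | t ∉ S}, {z : ↥Y | (z : T → ℝ) t = 0} := by
    ext z; simp [KS]
  rw [this]
  exact isClosed_biInter fun t _ => isClosed_eq (continuous_coord t) continuous_const

lemma isCompact_KS (hYcomp : IsCompact Y) (S : Set T) : IsCompact (KS Y S) := by
  haveI : CompactSpace ↥Y := isCompact_iff_compactSpace.1 hYcomp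
  exact (isClosed_KS S).isCompact

/-- continuity of truncation as a self-map of `↥Y`, given admissibility -/
lemma continuous_truncY {S : Set T} (hadm : ∀ y : ↥Y, truncf S (y : T → ℝ) ∈ Y) :
    Continuous (fun y : ↥Y => (⟨truncf S (y : T → ℝ), hadm y⟩ : ↥Y)) := by
  classical
  refine Continuous.subtype_mk ?_ _
  refine continuous_pi fun t => ?_
  by_cases ht : t ∈ S
  · simpa [truncf, ht] using continuous_coord (Y := Y) t
  · simpa [truncf, ht] using (continuous_const : Continuous fun _ : ↥Y => (0:ℝ))

lemma truncY_mem_KS {S : Set T} (hadm : ∀ y : ↥Y, truncf S (y : T → ℝ) ∈ Y) (y : ↥Y) :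
    (⟨truncf S (y : T → ℝ), hadm y⟩ : ↥Y) ∈ KS Y S := fun t ht => truncf_not_mem ht

section QCHelpers

variable {X : Type*} [TopologicalSpace X] {f : X × ↥Y → ℝ} {B : Set ↥Y}

/-- spread the value of a quasi-continuous section onto an open set -/
lemma qc_spread (hBqc : ∀ b ∈ B, QuasiContinuous fun x : X => f (x, b))
    {b : ↥Y} (hb : b ∈ B) (x₀ : X) {U : Set X} (hU : IsOpen U) (hx₀ : x₀ ∈ U)
    {γ : ℝ} (hγ : 0 < γ) :
    ∃ P : Set X, IsOpen P ∧ P.Nonempty ∧ P ⊆ U ∧ ∀ x ∈ P, |f (x, b) - f (x₀, b)| < γ := by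
  obtain ⟨G, hGopen, hGne, hGU, hGim⟩ :=
    hBqc b hb x₀ U (hU.mem_nhds hx₀) (Metric.ball (f (x₀, b)) γ) (Metric.ball_mem_nhds _ hγ)
  refine ⟨G, hGopen, hGne, hGU, fun x hx => ?_⟩
  have := hGim ⟨x, hx, rfl⟩
  rwa [Metric.mem_ball, Real.dist_eq] at this

/-- iterate quasi-continuity over a finite list to get uniformly small oscillation -/
lemma qc_list (hBqc : ∀ b ∈ B, QuasiContinuous fun x : X => f (x, b))
    (l : List ↥Y) (hl : ∀ b ∈ l, b ∈ B) {V : Set X} (hV : IsOpen V) (hVne : V.Nonempty)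
    {γ : ℝ} (hγ : 0 < γ) :
    ∃ G : Set X, IsOpen G ∧ G.Nonempty ∧ G ⊆ V ∧
      ∀ b ∈ l, ∀ x ∈ G, ∀ x' ∈ G, |f (x, b) - f (x', b)| ≤ 2 * γ := by
  induction l generalizing V with
  | nil => exact ⟨V, hV, hVne, subset_rfl, fun b hb => absurd hb List.not_mem_nil⟩
  | cons b l ih =>
    obtain ⟨G₁, hG₁o, hG₁ne, hG₁V, hG₁⟩ := ih (fun c hc => hl c (List.mem_cons_of_mem _ hc)) hV hVne
    obtain ⟨x₁, hx₁⟩ := hG₁ne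
    obtain ⟨P, hPo, hPne, hPG₁, hP⟩ :=
      qc_spread hBqc (hl b List.mem_cons_self) x₁ hG₁o hx₁ hγ
    refine ⟨P, hPo, hPne, hPG₁.trans hG₁V, fun c hc x hx x' hx' => ?_⟩
    rcases List.mem_cons.1 hc with rfl | hc
    · have h1 := hP x hx
      have h2 := hP x' hx'
      calc |f (x, c) - f (x', c)|
          ≤ |f (x, c) - f (x₁, c)| + |f (x₁, c) - f (x', c)| := abs_sub_le _ _ _
        _ ≤ γ + γ := by
            rw [abs_sub_comm (f (x₁, c))]
            exact add_le_add h1.le h2.le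
        _ = 2 * γ := by ring
    · exact hG₁ c hc x (hPG₁ hx) x' (hPG₁ hx')

end QCHelpers

section Baire

variable {X : Type*} [TopologicalSpace X] [BaireSpace X]

/-- Baire category: one of countably many sets covering `X` is dense in some open subset of `H`. -/
lemma baire_locate (E : ℕ × ℕ → Set X) {H : Set X} (hH : IsOpen H) (hHne : H.Nonempty)
    (hcov : ∀ x : X, ∃ p, x ∈ E p) :
    ∃ (p : ℕ × ℕ) (V : Set X), IsOpen V ∧ V.Nonempty ∧ V ⊆ H ∧
      ∀ O : Set X, IsOpen O → O.Nonempty → O ⊆ V → (O ∩ E p).Nonempty := by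
  by_contra hcon
  have hngood : ∀ p : ℕ × ℕ, ¬ (∃ V : Set X, IsOpen V ∧ V.Nonempty ∧ V ⊆ H ∧
      ∀ O : Set X, IsOpen O → O.Nonempty → O ⊆ V → (O ∩ E p).Nonempty) :=
    fun p hp => hcon ⟨p, hp⟩
  have hdense : ∀ p : ℕ × ℕ, Dense ((closure (E p ∩ H))ᶜ) := by
    intro p
    rw [dense_iff_inter_open]
    intro O hOopen hOne
    by_contra hO
    have hOsub : O ⊆ closure (E p ∩ H) := by
      intro x hx
      by_contra hxc
      exact hO ⟨x, hx, hxc⟩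
    have hmeet : ∀ O' : Set X, IsOpen O' → O'.Nonempty → O' ⊆ O → (O' ∩ (E p ∩ H)).Nonempty := by
      intro O' hO'open hO'ne hO'O
      obtain ⟨x, hx⟩ := hO'ne
      rcases _root_.mem_closure_iff.1 (hOsub (hO'O hx)) O' hO'open hx with ⟨y, hy1, hy2⟩
      exact ⟨y, hy1, hy2⟩
    refine hngood p ⟨O ∩ H, hOopen.inter hH, ?_, inter_subset_right, ?_⟩
    · obtain ⟨y, hy⟩ := hmeet O hOopen hOne subset_rfl
      exact ⟨y, hy.1, hy.2.2⟩
    · intro O' hO'open hO'ne hO'sub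
      obtain ⟨y, hy⟩ := hmeet O' hO'open hO'ne (hO'sub.trans inter_subset_left)
      exact ⟨y, hy.1, hy.2.1⟩
  have hD : Dense (⋂ p : ℕ × ℕ, (closure (E p ∩ H))ᶜ) :=
    dense_iInter_of_isOpen (fun p => (isClosed_closure).isOpen_compl) hdense
  obtain ⟨x, hxH, hxD⟩ := hD.inter_open_nonempty H hH hHne
  obtain ⟨p, hp⟩ := hcov x
  exact (Set.mem_iInter.1 hxD p) (subset_closure ⟨hp, hxH⟩)

/-- standard: a union of "good" opens is dense if every open set contains a good one -/
lemma dense_of_locally (A : Set X)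
    (h : ∀ W : Set X, IsOpen W → W.Nonempty → ∃ G : Set X, G.Nonempty ∧ G ⊆ W ∩ A) :
    Dense A := by
  rw [dense_iff_inter_open]
  intro U hU hUne
  obtain ⟨G, hGne, hG⟩ := h U hU hUne
  exact hGne.mono hG

end Baire

section Cluster

variable {α : Type*} [TopologicalSpace α]

lemma cluster_eq_of_tendsto [T2Space α] {u v : ℕ → α} {c : α} {r : α}
    (hc : MapClusterPt c atTop u) (huv : Tendsto (fun n => v n) atTop (𝓝 r))
    (hsame : u = v) : c = r := by
  subst hsame
  have h1 : ClusterPt c (Filter.map u atTop) := hc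
  have h2 : Filter.map u atTop ≤ 𝓝 r := huv
  have : (𝓝 c ⊓ 𝓝 r).NeBot :=
    @Filter.neBot_of_le _ _ _ h1 (le_inf inf_le_left (le_trans inf_le_right h2))
  exact t2_iff_nhds.1 ‹T2Space α› this

lemma cluster_exists_abs_lt {u : ℕ → ℝ} (hc : MapClusterPt 0 atTop u) {a : ℝ} (ha : 0 < a) :
    ∃ n, |u n| < a := by
  have hmem : {r : ℝ | |r| < a} ∈ 𝓝 (0:ℝ) := by
    have := Metric.ball_mem_nhds (0:ℝ) ha
    simpa [Metric.ball, Real.dist_eq] using this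
  obtain ⟨n, hn⟩ := (mapClusterPt_iff_frequently.1 hc _ hmem).exists
  exact ⟨n, hn⟩

lemma cluster_exists_lt {u : ℕ → ℝ} {c : ℝ} (hc : MapClusterPt c atTop u) {a : ℝ} (hca : c < a) :
    ∃ n, u n < a := by
  have hfreq := mapClusterPt_iff_frequently.1 hc (Set.Iio a) (Iio_mem_nhds hca)
  obtain ⟨n, hn⟩ := hfreq.exists
  exact ⟨n, hn⟩

end Cluster

section Kalenda

variable {T : Type*}

lemma exists_uniform_radius (I : Finset T) (p : T → ℝ) (u : T → Set ℝ)
    (h : ∀ t ∈ I, u t ∈ 𝓝 (p t)) :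
    ∃ γ : ℝ, 0 < γ ∧ ∀ t ∈ I, Metric.ball (p t) γ ⊆ u t := by
  have : ∀ t : T, ∃ ε : ℝ, 0 < ε ∧ (t ∈ I → Metric.ball (p t) ε ⊆ u t) := by
    intro t
    by_cases ht : t ∈ I
    · obtain ⟨ε, hε, hb⟩ := Metric.mem_nhds_iff.1 (h t ht)
      exact ⟨ε, hε, fun _ => hb⟩
    · exact ⟨1, one_pos, fun h' => absurd h' ht⟩
  choose g hg0 hgb using this
  by_cases hne : I.Nonempty
  · exact ⟨I.inf' hne g, (Finset.lt_inf'_iff hne).2 fun b _ => hg0 b,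
      fun t ht => (Metric.ball_subset_ball (Finset.inf'_le _ ht)).trans (hgb t ht)⟩
  · exact ⟨1, one_pos, fun t ht => absurd ⟨t, ht⟩ hne⟩

variable {Y : Set (T → ℝ)}

/-- countable "separating" subsets of `B` relative to countably many coordinates -/
lemma sel (B : Set ↥Y) (hBdense : Dense B) {S : Set T} (hS : S.Countable) :
    ∃ D : Set ↥Y, D.Countable ∧ D ⊆ B ∧
      ∀ (y : ↥Y) (F : Finset T), (↑F ⊆ S) → ∀ γ : ℝ, 0 < γ →
        ∃ d ∈ D, ∀ t ∈ F, |(d : T → ℝ) t - (y : T → ℝ) t| < γ := by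
  classical
  haveI : Countable ↥S := hS.to_subtype
  set π : ↥Y → (↥S → ℝ) := fun y s => (y : T → ℝ) s.1 with hπdef
  have hπcont : Continuous π := by
    refine continuous_pi fun s => ?_
    exact (continuous_apply (s : T)).comp continuous_subtype_val
  set Z : Set (↥S → ℝ) := π '' B with hZ
  obtain ⟨c, hccount, hcdense⟩ := TopologicalSpace.exists_countable_dense ↥Z
  set c0 : Set (↥S → ℝ) := Subtype.val '' c with hc0
  have hc0count : c0.Countable := hccount.image _
  have hc0Z : c0 ⊆ Z := by rintro w ⟨⟨w', hw'⟩, _, rfl⟩; exact hw'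
  have hZc0 : Z ⊆ closure c0 := by
    intro z hz
    have : (⟨z, hz⟩ : ↥Z) ∈ closure c := hcdense _
    rwa [closure_subtype] at this
  -- choose preimages in B
  have hpre : ∀ w : ↥c0, ∃ d : ↥Y, d ∈ B ∧ π d = (w : ↥S → ℝ) := by
    rintro ⟨w, hw⟩
    obtain ⟨d, hdB, hdw⟩ := hc0Z hw
    exact ⟨d, hdB, hdw⟩
  choose pick hpickB hpickπ using hpre
  haveI : Countable ↥c0 := hc0count.to_subtype
  refine ⟨Set.range pick, Set.countable_range _ , ?_, ?_⟩
  · rintro d ⟨w, rfl⟩; exact hpickB w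
  · intro y F hFS γ hγ
    -- π y is in the closure of c0
    have hyB : (y : ↥Y) ∈ closure B := hBdense _
    have h1 : π y ∈ closure Z := by
      have : π y ∈ π '' closure B := ⟨y, hyB, rfl⟩
      exact (image_closure_subset_closure_image hπcont) this
    have h2 : π y ∈ closure c0 := by
      have := closure_mono hZc0
      rw [closure_closure] at this
      exact this h1
    -- basic neighborhood of π y
    set J : Set ↥S := {s : ↥S | (s : T) ∈ F} with hJ
    have hJfin : J.Finite := (F.finite_toSet.preimage (Subtype.val_injective.injOn))
    set O : Set (↥S → ℝ) := ⋂ s ∈ J, {g : ↥S → ℝ | |g s - π y s| < γ} with hO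
    have hOopen : IsOpen O := hJfin.isOpen_biInter fun s _ =>
      isOpen_lt (((continuous_apply s).sub continuous_const).abs) continuous_const
    have hyO : π y ∈ O := by
      refine Set.mem_biInter fun s _ => ?_
      simp [hγ]
    obtain ⟨w, hwO, hwc0⟩ := _root_.mem_closure_iff.1 h2 O hOopen hyO
    refine ⟨pick ⟨w, hwc0⟩, ⟨⟨w, hwc0⟩, rfl⟩, fun t ht => ?_⟩
    have hts : t ∈ S := hFS ht
    have := Set.mem_iInter₂.1 hwO ⟨t, hts⟩ (by simpa [hJ] using ht)
    have hπd : π (pick ⟨w, hwc0⟩) = w := hpickπ _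
    have : |w ⟨t, hts⟩ - π y ⟨t, hts⟩| < γ := by simpa using this
    rw [← hπd] at this
    simpa [hπdef] using this

end Kalenda

section KalendaMain

variable {T : Type*} {Y : Set (T → ℝ)}

lemma kalenda (hYcomp : IsCompact Y) (B : Set ↥Y) (hBdense : Dense B)
    (hBsigma : ∀ b ∈ B, {t | (b : T → ℝ) t ≠ 0}.Countable)
    (S₀ : Set T) (h₀ : S₀.Countable) :
    ∃ S : Set T, S₀ ⊆ S ∧ S.Countable ∧ (∀ y : ↥Y, truncf S (y : T → ℝ) ∈ Y) ∧
      ∃ D : Set ↥Y, D ⊆ B ∧ (∀ d ∈ D, ∀ t, t ∉ S → (d : T → ℝ) t = 0) ∧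
        (∀ z : ↥Y, (∀ t, t ∉ S → (z : T → ℝ) t = 0) → z ∈ closure D) := by
  classical
  have hsel : ∀ Sc : {S : Set T // S.Countable}, ∃ D : Set ↥Y, D.Countable ∧ D ⊆ B ∧
      ∀ (y : ↥Y) (F : Finset T), (↑F ⊆ Sc.1) → ∀ γ : ℝ, 0 < γ →
        ∃ d ∈ D, ∀ t ∈ F, |(d : T → ℝ) t - (y : T → ℝ) t| < γ :=
    fun Sc => sel B hBdense Sc.2
  choose selD selDcount selDB selDapprox using hsel
  set step : {S : Set T // S.Countable} → {S : Set T // S.Countable} :=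
    fun Sc => ⟨Sc.1 ∪ ⋃ d ∈ selD Sc, {t | (d : T → ℝ) t ≠ 0},
      Sc.2.union ((selDcount Sc).biUnion fun d hd => hBsigma d (selDB Sc hd))⟩ with hstepdef
  set Sm : ℕ → {S : Set T // S.Countable} := fun m => step^[m] ⟨S₀, h₀⟩ with hSmdef
  have hSm_succ : ∀ m, Sm (m+1) = step (Sm m) := fun m => Function.iterate_succ_apply' step m _
  have hSm_zero : Sm 0 = ⟨S₀, h₀⟩ := rfl
  set S : Set T := ⋃ m, (Sm m).1 with hSdef
  set D : Set ↥Y := ⋃ m, selD (Sm m) with hDdef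
  have hmono : Monotone (fun m => (Sm m).1) := monotone_nat_of_le_succ (by
    intro m
    rw [hSm_succ]
    show (Sm m).1 ⊆ (Sm m).1 ∪ ⋃ d ∈ selD (Sm m), {t | (d : T → ℝ) t ≠ 0}
    exact subset_union_left)
  have hsupp : ∀ m, ∀ d ∈ selD (Sm m), {t | (d : T → ℝ) t ≠ 0} ⊆ (Sm (m+1)).1 := by
    intro m d hd
    rw [hSm_succ]
    show {t | (d : T → ℝ) t ≠ 0} ⊆ (Sm m).1 ∪ ⋃ d ∈ selD (Sm m), {t | (d : T → ℝ) t ≠ 0}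
    exact (Set.subset_biUnion_of_mem (u := fun d : ↥Y => {t | (d : T → ℝ) t ≠ 0}) hd).trans subset_union_right
  have hsuppS : ∀ m, ∀ d ∈ selD (Sm m), ∀ t, t ∉ S → (d : T → ℝ) t = 0 := by
    intro m d hd t ht
    by_contra h0
    exact ht (Set.mem_iUnion.2 ⟨m+1, hsupp m d hd h0⟩)
  have hDB : D ⊆ B := Set.iUnion_subset fun m => selDB _
  have hkey : ∀ y : ↥Y, truncf S (y : T → ℝ) ∈ closure (Subtype.val '' D) := by
    intro y
    rw [_root_.mem_closure_iff]
    intro O hOopen hpO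
    obtain ⟨I, u, hu, husub⟩ := isOpen_pi_iff.1 hOopen _ hpO
    obtain ⟨γ, hγ0, hγ⟩ := exists_uniform_radius I (truncf S (y : T → ℝ)) u
      (fun t ht => (hu t ht).1.mem_nhds (hu t ht).2)
    set F : Finset T := I.filter (fun t => t ∈ S) with hFdef
    have hFS : ∀ t : {t // t ∈ F}, ∃ m, (t : T) ∈ (Sm m).1 := by
      rintro ⟨t, ht⟩
      have : t ∈ S := (Finset.mem_filter.1 ht).2
      exact Set.mem_iUnion.1 this
    choose idx hidx using hFS
    set m : ℕ := F.attach.sup idx with hmdef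
    have hFSm : (↑F : Set T) ⊆ (Sm m).1 := by
      intro t ht
      exact hmono (Finset.le_sup (Finset.mem_attach _ ⟨t, ht⟩)) (hidx ⟨t, ht⟩)
    obtain ⟨d, hdD, hdapprox⟩ := selDapprox (Sm m) y F hFSm γ hγ0
    refine ⟨d, ?_, d, Set.mem_iUnion.2 ⟨m, hdD⟩, rfl⟩
    apply husub
    rw [Set.mem_pi]
    intro t ht
    by_cases hts : t ∈ S
    · have htF : t ∈ F := Finset.mem_filter.2 ⟨ht, hts⟩
      have h1 : |(d : T → ℝ) t - (y : T → ℝ) t| < γ := hdapprox t htF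
      have h2 : truncf S (y : T → ℝ) t = (y : T → ℝ) t := truncf_mem hts
      apply hγ t ht
      rw [Metric.mem_ball, Real.dist_eq, h2]
      exact h1
    · have h1 : (d : T → ℝ) t = 0 := hsuppS m d hdD t hts
      have h2 : truncf S (y : T → ℝ) t = 0 := truncf_not_mem hts
      rw [h1, ← h2]
      exact (hu t ht).2
  have hYclosed : IsClosed Y := hYcomp.isClosed
  have hvalD : Subtype.val '' D ⊆ Y := by rintro w ⟨d, _, rfl⟩; exact d.2
  refine ⟨S, ?_, Set.countable_iUnion (fun m => (Sm m).2), ?_, D, hDB, ?_, ?_⟩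
  · have : (Sm 0).1 ⊆ S := Set.subset_iUnion (fun m => (Sm m).1) 0
    simpa [hSm_zero] using this
  · intro y
    exact (closure_minimal hvalD hYclosed) (hkey y)
  · intro d hd t ht
    obtain ⟨m, hm⟩ := Set.mem_iUnion.1 hd
    exact hsuppS m d hm t ht
  · intro z hz
    have hzt : truncf S (z : T → ℝ) = (z : T → ℝ) := by
      funext t
      by_cases hts : t ∈ S
      · exact truncf_mem hts
      · rw [truncf_not_mem hts, hz t hts]
    have := hkey z
    rw [hzt] at this
    rwa [closure_subtype]

end KalendaMain

section Osc

variable {X T : Type*} [TopologicalSpace X] [BaireSpace X] {Y : Set (T → ℝ)}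
  {f : X × ↥Y → ℝ} {B : Set ↥Y}

lemma oscLemma (hYcomp : IsCompact Y)
    (hf2 : ∀ x : X, Continuous fun y : ↥Y => f (x, y))
    (hBqc : ∀ b ∈ B, QuasiContinuous fun x : X => f (x, b))
    {S : Set T} (hS : S.Countable)
    {D : Set ↥Y} (hDB : D ⊆ B) (hDsupp : ∀ d ∈ D, ∀ t, t ∉ S → (d : T → ℝ) t = 0)
    (hDdense : ∀ z : ↥Y, (∀ t, t ∉ S → (z : T → ℝ) t = 0) → z ∈ closure D)
    {H : Set X} (hH : IsOpen H) (hHne : H.Nonempty) {ε : ℝ} (hε : 0 < ε) :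
    ∃ G : Set X, IsOpen G ∧ G.Nonempty ∧ G ⊆ H ∧
      ∀ x ∈ G, ∀ x' ∈ G, ∀ z ∈ KS Y S, |f (x, z) - f (x', z)| ≤ ε := by
  classical
  obtain ⟨e, he⟩ := exists_enum hS
  set δ : ℝ := ε / 9 with hδdef
  have hδ : 0 < δ := by positivity
  have hDKS : D ⊆ KS Y S := fun d hd t ht => hDsupp d hd t ht
  -- (α) a uniform-continuity scale for each x
  have halpha : ∀ x : X, ∃ p : ℕ × ℕ, ∀ z ∈ KS Y S, ∀ z' ∈ KS Y S,
      (∀ t ∈ Fk e p.1, |(z : T → ℝ) t - (z' : T → ℝ) t| ≤ 4 / (p.2+1)) →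
      |f (x, z) - f (x, z')| ≤ δ := by
    intro x
    have hball : ∀ z : ↥Y, ∃ (I : Finset T) (γ : ℝ), 0 < γ ∧
        ∀ z' : ↥Y, (∀ t ∈ (I : Set T), |(z' : T → ℝ) t - (z : T → ℝ) t| < γ) →
          |f (x, z') - f (x, z)| < δ/2 := by
      intro z
      have hmem : (fun z' : ↥Y => f (x, z')) ⁻¹' Metric.ball (f (x, z)) (δ/2) ∈ 𝓝 z :=
        (hf2 x).continuousAt.preimage_mem_nhds (Metric.ball_mem_nhds _ (by positivity))
      obtain ⟨I, γ, hγ, hsub⟩ := exists_basic_nhd z hmem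
      refine ⟨I, γ, hγ, fun z' hz' => ?_⟩
      have := hsub (fun t ht => hz' t ht)
      rwa [Set.mem_preimage, Metric.mem_ball, Real.dist_eq] at this
    choose Iz γz hγz hvar using hball
    have hcover : KS Y S ⊆ ⋃ z ∈ KS Y S,
        {z' : ↥Y | ∀ t ∈ (↑(Iz z) : Set T), |(z' : T → ℝ) t - (z : T → ℝ) t| < γz z / 2} := by
      intro z hz
      refine Set.mem_biUnion hz ?_
      intro t _
      simpa using half_pos (hγz z)
    obtain ⟨zs, hzsKS, hzsfin, hzscov⟩ :=
      (isCompact_KS hYcomp S).elim_finite_subcover_image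
        (fun z _ => isOpen_basic _ (Iz z).finite_toSet _) hcover
    have hIS : (⋃ z ∈ zs, ((Iz z : Set T) ∩ S)).Finite :=
      hzsfin.biUnion fun z _ => (Iz z).finite_toSet.inter_of_left S
    obtain ⟨k, hk⟩ := exists_Fk_superset (e := e) hIS
      (by rw [he]; exact Set.iUnion₂_subset fun z _ => inter_subset_right)
    have hms : ∀ z : ↥Y, ∃ m : ℕ, 4 / (m+1 : ℝ) < γz z / 2 := by
      intro z
      obtain ⟨m, hm⟩ := exists_nat_gt (8 / γz z)
      refine ⟨m, ?_⟩
      rw [div_lt_iff₀ (by positivity)]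
      rw [div_lt_iff₀ (hγz z)] at hm
      nlinarith [hγz z, hm, (Nat.cast_nonneg m : (0:ℝ) ≤ m)]
    choose ms hms' using hms
    set m : ℕ := hzsfin.toFinset.sup ms with hmdef
    have hmz : ∀ z ∈ zs, 4 / (m+1 : ℝ) < γz z / 2 := by
      intro z hz
      refine lt_of_le_of_lt ?_ (hms' z)
      apply div_le_div_of_nonneg_left (by norm_num) (by positivity)
      have : ms z ≤ m := Finset.le_sup (hzsfin.mem_toFinset.2 hz)
      exact_mod_cast Nat.succ_le_succ this
    refine ⟨(k, m), ?_⟩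
    intro z hzKS z' hz'KS hclose
    obtain ⟨z₀, hz₀zs, hzU⟩ := Set.mem_iUnion₂.1 (hzscov hzKS)
    simp only [Set.mem_setOf_eq] at hzU
    have hz'U : ∀ t ∈ (↑(Iz z₀) : Set T), |(z' : T → ℝ) t - (z₀ : T → ℝ) t| < γz z₀ := by
      intro t ht
      by_cases htS : t ∈ S
      · have htFk : t ∈ Fk e k := hk (Set.mem_biUnion hz₀zs ⟨ht, htS⟩)
        have h1 : |(z : T → ℝ) t - (z' : T → ℝ) t| ≤ 4/(m+1) := hclose t htFk
        have h2 : |(z : T → ℝ) t - (z₀ : T → ℝ) t| < γz z₀ / 2 := hzU t ht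
        have h3 := hmz z₀ hz₀zs
        have h4 : |(z' : T → ℝ) t - (z₀ : T → ℝ) t|
            ≤ |(z' : T → ℝ) t - (z : T → ℝ) t| + |(z : T → ℝ) t - (z₀ : T → ℝ) t| :=
          abs_sub_le _ _ _
        rw [abs_sub_comm ((z' : T → ℝ) t) ((z : T → ℝ) t)] at h4
        linarith
      · have h1 : (z : T → ℝ) t = 0 := hzKS t htS
        have h2 : (z' : T → ℝ) t = 0 := hz'KS t htS
        rw [h2, ← h1]
        exact lt_of_lt_of_le (hzU t ht) (by linarith [hγz z₀])
    have hzvar : |f (x, z) - f (x, z₀)| < δ/2 :=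
      hvar z₀ z (fun t ht => lt_of_lt_of_le (hzU t ht) (by linarith [hγz z₀]))
    have hz'var : |f (x, z') - f (x, z₀)| < δ/2 := hvar z₀ z' hz'U
    rw [abs_le]
    rw [abs_lt] at hzvar hz'var
    constructor <;> linarith
  -- Baire localization
  set E : ℕ × ℕ → Set X := fun p => {x | ∀ d ∈ D, ∀ d' ∈ D,
    (∀ t ∈ Fk e p.1, |(d : T → ℝ) t - (d' : T → ℝ) t| ≤ 4/(p.2+1)) →
      |f (x, d) - f (x, d')| ≤ δ} with hEdef
  have hcov : ∀ x : X, ∃ p, x ∈ E p := by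
    intro x
    obtain ⟨p, hp⟩ := halpha x
    exact ⟨p, fun d hd d' hd' hcl => hp d (hDKS hd) d' (hDKS hd') hcl⟩
  obtain ⟨⟨k, m⟩, V, hVopen, hVne, hVH, hVE⟩ := baire_locate E hH hHne hcov
  -- a finite net from D at scale (k, m)
  have hnetcov : KS Y S ⊆ ⋃ d ∈ D,
      {z : ↥Y | ∀ t ∈ Fk e k, |(z : T → ℝ) t - (d : T → ℝ) t| < 1/(m+1)} := by
    intro z hz
    obtain ⟨d, hdD, hdO⟩ := closure_meets (hDdense z hz)
      (isOpen_basic (Y := Y) (z : T → ℝ) (Fk_finite e k) (1/(m+1)))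
      (by intro t _; simpa using (by positivity : (0:ℝ) < 1/(m+1)))
    refine Set.mem_biUnion hdD ?_
    intro t ht
    rw [abs_sub_comm]
    exact hdO t ht
  obtain ⟨D', hD'D, hD'fin, hD'cov⟩ :=
    (isCompact_KS hYcomp S).elim_finite_subcover_image
      (fun d _ => isOpen_basic _ (Fk_finite e k) _) hnetcov
  obtain ⟨G, hGopen, hGne, hGV, hGosc⟩ := qc_list hBqc hD'fin.toFinset.toList
    (fun b hb => hDB (hD'D (hD'fin.mem_toFinset.1 (Finset.mem_toList.1 hb))))
    hVopen hVne (half_pos hδ)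
  refine ⟨G, hGopen, hGne, hGV.trans hVH, ?_⟩
  intro x hx x' hx' z hzKS
  obtain ⟨di, hdiD', hdiU⟩ := Set.mem_iUnion₂.1 (hD'cov hzKS)
  simp only [Set.mem_setOf_eq] at hdiU
  have hdil : di ∈ hD'fin.toFinset.toList :=
    Finset.mem_toList.2 (hD'fin.mem_toFinset.2 hdiD')
  have hkey : ∀ xx ∈ G, |f (xx, z) - f (xx, di)| ≤ 4*δ := by
    intro xx hxx
    have hO : IsOpen {z' : ↥Y | |f (xx, z') - f (xx, z)| < δ ∧
        ∀ t ∈ Fk e k, |(z' : T → ℝ) t - (z : T → ℝ) t| < 1/(m+1)} := by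
      have h1 : IsOpen {z' : ↥Y | |f (xx, z') - f (xx, z)| < δ} :=
        isOpen_lt (((hf2 xx).sub continuous_const).abs) continuous_const
      have h2 := isOpen_basic (Y := Y) (z : T → ℝ) (Fk_finite e k) (1/(m+1))
      exact h1.inter h2
    obtain ⟨d', hd'D, hd'O⟩ := closure_meets (hDdense z hzKS) hO
      ⟨by simpa using hδ, fun t _ => by simpa using (by positivity : (0:ℝ) < 1/(m+1))⟩
    obtain ⟨G'', hG''open, hG''ne, hG''G, hG''⟩ := qc_spread hBqc (hDB hd'D) xx hGopen hxx hδ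
    obtain ⟨x'', hx''G'', hx''E⟩ := hVE G'' hG''open hG''ne (hG''G.trans hGV)
    have hpair : ∀ t ∈ Fk e k, |(d' : T → ℝ) t - (di : T → ℝ) t| ≤ 4/(m+1) := by
      intro t ht
      have h1 := (hd'O.2 t ht).le
      have h2 := (hdiU t ht).le
      have h4 : |(d' : T → ℝ) t - (di : T → ℝ) t|
          ≤ |(d' : T → ℝ) t - (z : T → ℝ) t| + |(z : T → ℝ) t - (di : T → ℝ) t| :=
        abs_sub_le _ _ _
      have h5 : (1:ℝ)/(m+1) + 1/(m+1) ≤ 4/(m+1) := by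
        rw [← add_div]
        gcongr <;> norm_num
      linarith
    have hx''pair : |f (x'', d') - f (x'', di)| ≤ δ := hx''E d' hd'D di (hD'D hdiD') hpair
    have h1 : |f (xx, d') - f (xx, z)| < δ := hd'O.1
    have h2 : |f (x'', d') - f (xx, d')| < δ := hG'' x'' hx''G''
    have h3 : |f (xx, di) - f (x'', di)| ≤ δ := by
      have := hGosc di hdil xx hxx x'' (hG''G hx''G'')
      linarith
    rw [abs_le]
    rw [abs_lt] at h1 h2
    rw [abs_le] at hx''pair h3
    constructor <;> linarith
  have hkx := hkey x hx
  have hkx' := hkey x' hx'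
  have hmid : |f (x, di) - f (x', di)| ≤ δ := by
    have := hGosc di hdil x hx x' hx'
    linarith
  rw [abs_le]
  rw [abs_le] at hkx hkx' hmid
  constructor <;> [linarith; linarith]

end Osc

section Chain

variable {X : Type*} [TopologicalSpace X] [BaireSpace X] {N : Type*}

/-- From a "step" operation refining open sets, a Baire space yields an infinite chain
whose opens have a common point. -/
lemma chainLemma (G : N → Set X) (step : N → Set X → N) (root : N)
    (hrootOpen : IsOpen (G root)) (hrootNe : (G root).Nonempty)
    (hstep : ∀ n (H : Set X), IsOpen H → H.Nonempty → H ⊆ G n →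
      IsOpen (G (step n H)) ∧ (G (step n H)).Nonempty ∧ G (step n H) ⊆ H) :
    ∃ (u : ℕ → N) (x : X), u 0 = root ∧
      (∀ k, ∃ H : Set X, IsOpen H ∧ H.Nonempty ∧ H ⊆ G (u k) ∧ u (k+1) = step (u k) H) ∧
      ∀ k, x ∈ G (u k) := by
  classical
  set W : Set X := G root with hWdef
  set Good : Set N → Prop := fun A =>
    (∀ n ∈ A, IsOpen (G n) ∧ (G n).Nonempty ∧ G n ⊆ W) ∧ A.PairwiseDisjoint G with hGooddef
  set Dk : Set N → Prop := fun A =>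
    ∀ O : Set X, IsOpen O → O.Nonempty → O ⊆ W → (O ∩ ⋃ n ∈ A, G n).Nonempty with hDkdef
  have hzstep : ∀ p : {A : Set N // Good A ∧ Dk A}, ∃ A' : Set N, (Good A' ∧ Dk A') ∧
      ∀ n' ∈ A', ∃ n ∈ p.1, ∃ H : Set X,
        IsOpen H ∧ H.Nonempty ∧ H ⊆ G n ∧ n' = step n H := by
    rintro ⟨A, hGood, hDk⟩
    set C : Set (Set N) := {A' | A'.PairwiseDisjoint G ∧ ∀ n' ∈ A', ∃ n ∈ A, ∃ H : Set X,
      IsOpen H ∧ H.Nonempty ∧ H ⊆ G n ∧ n' = step n H} with hCdef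
    have hCchain : ∀ c ⊆ C, IsChain (· ⊆ ·) c → ∃ ub ∈ C, ∀ s ∈ c, s ⊆ ub := by
      intro c hcC hchain
      refine ⟨⋃₀ c, ⟨?_, ?_⟩, fun s hs => subset_sUnion_of_mem hs⟩
      · intro a ha b hb hab
        obtain ⟨Aa, hAa, haA⟩ := ha
        obtain ⟨Ab, hAb, hbA⟩ := hb
        rcases eq_or_ne Aa Ab with rfl | hne
        · exact (hcC hAa).1 haA hbA hab
        · rcases hchain hAa hAb hne with h | h
          · exact (hcC hAb).1 (h haA) hbA hab
          · exact (hcC hAa).1 haA (h hbA) hab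
      · rintro n' ⟨A', hA', hn'⟩
        exact (hcC hA').2 n' hn'
    obtain ⟨M, hM⟩ := zorn_subset C hCchain
    have hMC : M ∈ C := hM.prop
    have hMelts : ∀ n' ∈ M, IsOpen (G n') ∧ (G n').Nonempty ∧ G n' ⊆ W := by
      intro n' hn'
      obtain ⟨n, hnA, H, hHo, hHne, hHsub, rfl⟩ := hMC.2 n' hn'
      obtain ⟨h1, h2, h3⟩ := hstep n H hHo hHne hHsub
      exact ⟨h1, h2, h3.trans (hHsub.trans (hGood.1 n hnA).2.2)⟩
    have hMDk : Dk M := by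
      intro O hOo hOne hOW
      by_contra hempty
      have hOdisj : ∀ n' ∈ M, Disjoint O (G n') := by
        intro n' hn'
        rw [Set.disjoint_right]
        intro x hx hxO
        exact hempty ⟨x, hxO, Set.mem_biUnion hn' hx⟩
      obtain ⟨x, hxO, hxU⟩ := hDk O hOo hOne hOW
      obtain ⟨n, hnA, hxG⟩ := Set.mem_iUnion₂.1 hxU
      set H : Set X := O ∩ G n with hHdef
      have hHo : IsOpen H := hOo.inter (hGood.1 n hnA).1
      have hHne : H.Nonempty := ⟨x, hxO, hxG⟩
      have hHsub : H ⊆ G n := inter_subset_right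
      set n' : N := step n H with hn'def
      obtain ⟨h1, h2, h3⟩ := hstep n H hHo hHne hHsub
      have hn'disj : ∀ m ∈ M, Disjoint (G n') (G m) := by
        intro m hm
        exact Set.disjoint_of_subset_left (h3.trans inter_subset_left) (hOdisj m hm)
      have hn'new : n' ∉ M := by
        intro hn'M
        obtain ⟨y, hy⟩ := h2
        exact (hn'disj n' hn'M).le_bot ⟨hy, hy⟩
      have hins : insert n' M ∈ C := by
        constructor
        · refine hMC.1.insert fun m hm hne => hn'disj m hm
        · intro a ha
          rcases Set.mem_insert_iff.1 ha with rfl | haM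
          · exact ⟨n, hnA, H, hHo, hHne, hHsub, rfl⟩
          · exact hMC.2 a haM
      have := hM.2 hins (Set.subset_insert _ _)
      exact hn'new (this (Set.mem_insert _ _))
    exact ⟨M, ⟨⟨hMelts, hMC.1⟩, hMDk⟩, fun n' hn' => hMC.2 n' hn'⟩
  -- iterate
  have hroot0 : Good {root} ∧ Dk {root} := by
    refine ⟨⟨?_, Set.pairwiseDisjoint_singleton _ _⟩, ?_⟩
    · intro n hn
      rcases Set.mem_singleton_iff.1 hn with rfl
      exact ⟨hrootOpen, hrootNe, subset_rfl⟩
    · intro O hOo hOne hOW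
      obtain ⟨x, hx⟩ := hOne
      exact ⟨x, hx, Set.mem_biUnion rfl (hOW hx)⟩
  set F : {A : Set N // Good A ∧ Dk A} → {A : Set N // Good A ∧ Dk A} :=
    fun p => ⟨(hzstep p).choose, (hzstep p).choose_spec.1⟩ with hFdef
  have hF : ∀ p, ∀ n' ∈ (F p).1, ∃ n ∈ p.1, ∃ H : Set X,
      IsOpen H ∧ H.Nonempty ∧ H ⊆ G n ∧ n' = step n H :=
    fun p => (hzstep p).choose_spec.2
  set M : ℕ → {A : Set N // Good A ∧ Dk A} := fun k => F^[k] ⟨{root}, hroot0⟩ with hMdef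
  have hM_succ : ∀ k, M (k+1) = F (M k) := fun k => Function.iterate_succ_apply' F k _
  have hM_zero : (M 0).1 = {root} := rfl
  -- dense open sets
  set Ok : ℕ → Set X := fun k => (⋃ n ∈ (M k).1, G n) ∪ (closure W)ᶜ with hOkdef
  have hOkOpen : ∀ k, IsOpen (Ok k) :=
    fun k => (isOpen_biUnion fun n hn => ((M k).2.1.1 n hn).1).union isClosed_closure.isOpen_compl
  have hOkDense : ∀ k, Dense (Ok k) := by
    intro k
    rw [dense_iff_inter_open]
    intro Q hQo hQne
    by_cases hQW : (Q ∩ W).Nonempty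
    · obtain ⟨x, hx1, hx2⟩ := (M k).2.2 (Q ∩ W) (hQo.inter hrootOpen) hQW inter_subset_right
      exact ⟨x, hx1.1, Set.mem_union_left _ hx2⟩
    · have : ∃ x ∈ Q, x ∉ closure W := by
        by_contra hcl
        push_neg at hcl
        obtain ⟨x, hx⟩ := hQne
        obtain ⟨y, hy1, hy2⟩ := _root_.mem_closure_iff.1 (hcl x hx) Q hQo hx
        exact hQW ⟨y, hy1, hy2⟩
      obtain ⟨x, hx1, hx2⟩ := this
      exact ⟨x, hx1, Set.mem_union_right _ hx2⟩
  have hDense : Dense (⋂ k, Ok k) := dense_iInter_of_isOpen hOkOpen hOkDense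
  obtain ⟨x, hxW, hxA⟩ := hDense.inter_open_nonempty W hrootOpen hrootNe
  have hxOk : ∀ k, ∃ n ∈ (M k).1, x ∈ G n := by
    intro k
    rcases Set.mem_iInter.1 hxA k with h | h
    · obtain ⟨n, hn, hxn⟩ := Set.mem_iUnion₂.1 h
      exact ⟨n, hn, hxn⟩
    · exact absurd (subset_closure hxW) h
  have huniq : ∀ k, ∀ n₁ ∈ (M k).1, ∀ n₂ ∈ (M k).1, x ∈ G n₁ → x ∈ G n₂ → n₁ = n₂ := by
    intro k n₁ h₁ n₂ h₂ hx₁ hx₂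
    by_contra hne
    exact ((M k).2.1.2 h₁ h₂ hne).le_bot ⟨hx₁, hx₂⟩
  set u : ℕ → N := fun k => (hxOk k).choose with hudef
  have huM : ∀ k, u k ∈ (M k).1 := fun k => (hxOk k).choose_spec.1
  have hux : ∀ k, x ∈ G (u k) := fun k => (hxOk k).choose_spec.2
  refine ⟨u, x, ?_, ?_, hux⟩
  · have := huM 0
    rw [hM_zero] at this
    exact this
  · intro k
    have hmem : u (k+1) ∈ (F (M k)).1 := by rw [← hM_succ]; exact huM (k+1)
    obtain ⟨n, hnM, H, hHo, hHne, hHsub, hstepEq⟩ := hF (M k) (u (k+1)) hmem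
    have hxH : x ∈ H := by
      have := hstep n H hHo hHne hHsub
      rw [← hstepEq] at this
      exact this.2.2 (hux (k+1))
    have hnu : n = u k := huniq k n hnM (u k) (huM k) (hHsub hxH) (hux k)
    exact ⟨H, hHo, hHne, hnu ▸ hHsub, hnu ▸ hstepEq⟩

end Chain

section Phase1

/-- finite double-index due set -/
lemma Fdue_finite {T : Type*} (es : ℕ → ℕ → Option T) (k : ℕ) :
    {t | ∃ j ≤ k, ∃ i ≤ k, es j i = some t}.Finite := by
  have hsub : {t | ∃ j ≤ k, ∃ i ≤ k, es j i = some t}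
      ⊆ ⋃ j ∈ Finset.range (k+1), Fk (es j) k := by
    rintro t ⟨j, hj, i, hi, ht⟩
    exact Set.mem_biUnion (Finset.mem_range.2 (Nat.lt_succ_of_le hj)) ⟨i, hi, ht⟩
  exact Set.Finite.subset (Set.Finite.biUnion (Finset.range (k+1)).finite_toSet
    (fun j _ => Fk_finite (es j) k)) hsub

variable {X T : Type*}

/-- nodes for the chain construction -/
structure PNode (X T : Type*) (Y : Set (T → ℝ)) where
  Gs : Set X
  k : ℕ
  es : ℕ → ℕ → Option T
  bds : ℕ → ↥Y × ↥Y

variable [TopologicalSpace X] [BaireSpace X] {Y : Set (T → ℝ)}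
  {f : X × ↥Y → ℝ} {B : Set ↥Y}

/-- the data recorded along one step of the chain -/
def PostP (Y : Set (T → ℝ)) (f : X × ↥Y → ℝ) (δ : ℝ) (n n' : PNode X T Y) : Prop :=
  n'.k = n.k + 1 ∧
  (∀ j ≤ n.k, n'.es j = n.es j) ∧
  SOf (n.es n.k) ⊆ SOf (n'.es (n.k+1)) ∧
  (∀ x ∈ n'.Gs, 5*δ/8 ≤ |f (x, (n'.bds n.k).1) - f (x, (n'.bds n.k).2)|) ∧
  (∀ t, t ∉ SOf (n'.es (n.k+1)) → ((n'.bds n.k).1 : T → ℝ) t = 0) ∧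
  (∀ t, t ∉ SOf (n.es n.k) → ((n'.bds n.k).2 : T → ℝ) t = 0) ∧
  (∀ t, (∃ j ≤ n.k, ∃ i ≤ n.k, n.es j i = some t) → t ∈ SOf (n.es n.k) →
    |((n'.bds n.k).2 : T → ℝ) t - ((n'.bds n.k).1 : T → ℝ) t| ≤ (1/2 : ℝ)^(n.k))

/-- well-formedness of a node -/
def WFP (B : Set ↥Y) (W : Set X) (n : PNode X T Y) : Prop :=
  n.Gs ⊆ W ∧
  (∀ y : ↥Y, truncf (SOf (n.es n.k)) (y : T → ℝ) ∈ Y) ∧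
  ∃ D : Set ↥Y, D ⊆ B ∧ (∀ d ∈ D, ∀ t, t ∉ SOf (n.es n.k) → (d : T → ℝ) t = 0) ∧
    (∀ z : ↥Y, (∀ t, t ∉ SOf (n.es n.k) → (z : T → ℝ) t = 0) → z ∈ closure D)

lemma phase1 [Nonempty ↥Y] (hYcomp : IsCompact Y)
    (hf2 : ∀ x : X, Continuous fun y : ↥Y => f (x, y))
    (hBdense : Dense B)
    (hBsigma : ∀ b ∈ B, {t | (b : T → ℝ) t ≠ 0}.Countable)
    (hBqc : ∀ b ∈ B, QuasiContinuous fun x : X => f (x, b))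
    {W : Set X} (hW : IsOpen W) (hWne : W.Nonempty) {δ : ℝ} (hδ : 0 < δ) :
    ∃ (S : Set T) (_ : S.Countable) (hadm : ∀ y : ↥Y, truncf S (y : T → ℝ) ∈ Y)
      (D : Set ↥Y), D ⊆ B ∧ (∀ d ∈ D, ∀ t, t ∉ S → (d : T → ℝ) t = 0) ∧
      (∀ z : ↥Y, (∀ t, t ∉ S → (z : T → ℝ) t = 0) → z ∈ closure D) ∧
      ∃ G : Set X, IsOpen G ∧ G.Nonempty ∧ G ⊆ W ∧
        ∀ x ∈ G, ∀ y : ↥Y, |f (x, y) - f (x, ⟨truncf S (y : T → ℝ), hadm y⟩)| ≤ δ := by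
  classical
  by_contra hcon
  -- the failure hypothesis
  have hF : ∀ (S : Set T), S.Countable → ∀ (hadm : ∀ y : ↥Y, truncf S (y : T → ℝ) ∈ Y)
      (D : Set ↥Y), D ⊆ B → (∀ d ∈ D, ∀ t, t ∉ S → (d : T → ℝ) t = 0) →
      (∀ z : ↥Y, (∀ t, t ∉ S → (z : T → ℝ) t = 0) → z ∈ closure D) →
      ∀ (G : Set X), IsOpen G → G.Nonempty → G ⊆ W →
      ∃ x ∈ G, ∃ y : ↥Y, δ < |f (x, y) - f (x, ⟨truncf S (y : T → ℝ), hadm y⟩)| := by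
    intro S hS hadm D hDB hDsupp hDdense G hGo hGne hGW
    by_contra hno
    push_neg at hno
    exact hcon ⟨S, hS, hadm, D, hDB, hDsupp, hDdense, G, hGo, hGne, hGW,
      fun x hx y => hno x hx y⟩
  -- the step construction
  have hstepEx : ∀ n : PNode X T Y, WFP B W n → ∀ H : Set X,
      IsOpen H → H.Nonempty → H ⊆ n.Gs →
      ∃ n' : PNode X T Y, WFP B W n' ∧ IsOpen n'.Gs ∧ n'.Gs.Nonempty ∧ n'.Gs ⊆ H ∧
        PostP Y f δ n n' := by
    intro n hWF H hHo hHne hHsub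
    obtain ⟨hGW, hadm, D, hDB, hDsupp, hDdense⟩ := hWF
    set S : Set T := SOf (n.es n.k) with hSdef
    have hS : S.Countable := SOf_countable _
    -- Phase 2 on the current countable structure
    obtain ⟨H', hH'o, hH'ne, hH'H, hosc⟩ := oscLemma hYcomp hf2 hBqc hS hDB hDsupp hDdense
      hHo hHne (ε := δ/8) (by positivity)
    -- failure witness
    obtain ⟨x₀, hx₀H', y₀, hgap⟩ := hF S hS hadm D hDB hDsupp hDdense H' hH'o hH'ne
      (hH'H.trans (hHsub.trans hGW))
    -- replace the witness by an element of B
    have htr_cont : Continuous (fun y : ↥Y => (⟨truncf S (y : T → ℝ), hadm y⟩ : ↥Y)) :=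
      continuous_truncY hadm
    have hopen : IsOpen {y : ↥Y |
        δ < |f (x₀, y) - f (x₀, ⟨truncf S (y : T → ℝ), hadm y⟩)|} := by
      have hc : Continuous (fun y : ↥Y =>
          |f (x₀, y) - f (x₀, ⟨truncf S (y : T → ℝ), hadm y⟩)|) :=
        ((hf2 x₀).sub ((hf2 x₀).comp htr_cont)).abs
      exact isOpen_lt continuous_const hc
    obtain ⟨b, hbB, hbgap⟩ := hBdense.exists_mem_open hopen ⟨y₀, hgap⟩
    set w : ↥Y := ⟨truncf S (b : T → ℝ), hadm b⟩ with hwdef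
    have hwKS : ∀ t, t ∉ S → (w : T → ℝ) t = 0 := fun t ht => truncf_not_mem ht
    -- choose d ∈ D close to w
    set Fdue : Set T := {t | ∃ j ≤ n.k, ∃ i ≤ n.k, n.es j i = some t} with hFduedef
    have hOd : IsOpen {z : ↥Y | |f (x₀, z) - f (x₀, w)| < δ/8 ∧
        ∀ t ∈ Fdue, |(z : T → ℝ) t - (w : T → ℝ) t| < (1/2 : ℝ)^n.k} := by
      have h1 : IsOpen {z : ↥Y | |f (x₀, z) - f (x₀, w)| < δ/8} :=
        isOpen_lt ((hf2 x₀).sub continuous_const).abs continuous_const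
      exact h1.inter (isOpen_basic (Y := Y) (w : T → ℝ) (Fdue_finite n.es n.k) _)
    obtain ⟨d, hdD, hdO⟩ := closure_meets (hDdense w hwKS) hOd
      ⟨by simpa using (by positivity : (0:ℝ) < δ/8),
       fun t _ => by simpa using (by positivity : (0:ℝ) < (1/2 : ℝ)^n.k)⟩
    -- spread b's value
    obtain ⟨P, hPo, hPne, hPH', hPval⟩ := qc_spread hBqc hbB x₀ hH'o hx₀H'
      (γ := δ/8) (by positivity)
    -- the separation property on P
    have hsep : ∀ x ∈ P, 5*δ/8 ≤ |f (x, b) - f (x, d)| := by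
      intro x hx
      have h1 : δ < |f (x₀, b) - f (x₀, w)| := hbgap
      have h2 : |f (x, b) - f (x₀, b)| < δ/8 := hPval x hx
      have h3 : |f (x₀, d) - f (x₀, w)| < δ/8 := hdO.1
      have h4 : |f (x, d) - f (x₀, d)| ≤ δ/8 := by
        have := hosc x (hPH' hx) x₀ hx₀H' d (fun t ht => hDsupp d hdD t ht)
        exact this
      have t1 : |f (x₀, b) - f (x₀, w)| ≤ |f (x₀, b) - f (x, b)| + |f (x, b) - f (x₀, w)| :=
        abs_sub_le _ _ _
      have t2 : |f (x, b) - f (x₀, w)| ≤ |f (x, b) - f (x, d)| + |f (x, d) - f (x₀, w)| :=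
        abs_sub_le _ _ _
      have t3 : |f (x, d) - f (x₀, w)| ≤ |f (x, d) - f (x₀, d)| + |f (x₀, d) - f (x₀, w)| :=
        abs_sub_le _ _ _
      have t4 : |f (x₀, b) - f (x, b)| = |f (x, b) - f (x₀, b)| := abs_sub_comm _ _
      linarith
    -- extend the countable structure
    obtain ⟨S', hS'sub, hS'count, hadm', D', hD'B, hD'supp, hD'dense⟩ :=
      kalenda hYcomp B hBdense hBsigma (S ∪ {t | (b : T → ℝ) t ≠ 0})
        (hS.union (hBsigma b hbB))
    obtain ⟨e', he'⟩ := exists_enum hS'count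
    refine ⟨⟨P, n.k + 1, fun j => if j = n.k + 1 then e' else n.es j,
      fun j => if j = n.k then (b, d) else n.bds j⟩, ?_, hPo, hPne, hPH'.trans hH'H, ?_⟩
    · -- well-formedness
      refine ⟨(hPH'.trans (hH'H.trans (hHsub.trans hGW))), ?_, ?_⟩
      · intro y
        simp only [eq_self_iff_true, if_true, he']
        exact hadm' y
      · refine ⟨D', hD'B, ?_, ?_⟩
        · intro d' hd' t ht
          simp only [eq_self_iff_true, if_true, he'] at ht
          exact hD'supp d' hd' t ht
        · intro z hz
          simp only [eq_self_iff_true, if_true, he'] at hz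
          exact hD'dense z hz
    · -- post conditions
      have hb_new : (if n.k = n.k then ((b : ↥Y), d) else n.bds n.k) = (b, d) := if_pos rfl
      refine ⟨rfl, ?_, ?_, ?_, ?_, ?_, ?_⟩
      · intro j hj
        have : j ≠ n.k + 1 := by omega
        simp [this]
      · simp only [eq_self_iff_true, if_true, he']
        intro t ht
        exact hS'sub (Set.mem_union_left _ ht)
      · intro x hx
        simp only [eq_self_iff_true, if_true]
        exact hsep x hx
      · intro t ht
        simp only [eq_self_iff_true, if_true, he'] at ht ⊢
        by_contra h0
        exact ht (hS'sub (Set.mem_union_right _ h0))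
      · intro t ht
        simp only [eq_self_iff_true, if_true]
        exact hDsupp d hdD t ht
      · intro t htdue htS
        simp only [eq_self_iff_true, if_true]
        have h1 : |(d : T → ℝ) t - (w : T → ℝ) t| < (1/2 : ℝ)^n.k := hdO.2 t htdue
        have h2 : (w : T → ℝ) t = (b : T → ℝ) t := truncf_mem htS
        rw [h2] at h1
        exact h1.le
  -- root node
  obtain ⟨S₀, -, hS₀count, hadm₀, D₀, hD₀B, hD₀supp, hD₀dense⟩ :=
    kalenda hYcomp B hBdense hBsigma ∅ Set.countable_empty
  obtain ⟨e₀, he₀⟩ := exists_enum hS₀count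
  have b₀ : ↥Y := Classical.arbitrary ↥Y
  set root : PNode X T Y := ⟨W, 0, fun _ => e₀, fun _ => (b₀, b₀)⟩ with hrootdef
  have hrootWF : WFP B W root := by
    refine ⟨subset_rfl, ?_, D₀, hD₀B, ?_, ?_⟩
    · intro y
      simp only [hrootdef, he₀]
      exact hadm₀ y
    · intro d hd t ht
      simp only [hrootdef, he₀] at ht
      exact hD₀supp d hd t ht
    · intro z hz
      simp only [hrootdef, he₀] at hz
      exact hD₀dense z hz
  -- a step function by choice
  have hstepEx' : ∀ (n : {n : PNode X T Y // WFP B W n}) (H : Set X),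
      ∃ n' : {n : PNode X T Y // WFP B W n},
        (IsOpen H ∧ H.Nonempty ∧ H ⊆ n.1.Gs) →
        (IsOpen n'.1.Gs ∧ n'.1.Gs.Nonempty ∧ n'.1.Gs ⊆ H ∧ PostP Y f δ n.1 n'.1) := by
    intro n H
    by_cases h : IsOpen H ∧ H.Nonempty ∧ H ⊆ n.1.Gs
    · obtain ⟨n', hWF', ho, hne, hsub, hpost⟩ := hstepEx n.1 n.2 H h.1 h.2.1 h.2.2
      exact ⟨⟨n', hWF'⟩, fun _ => ⟨ho, hne, hsub, hpost⟩⟩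
    · exact ⟨n, fun hcon' => absurd hcon' h⟩
  choose stepF hstepF using hstepEx'
  obtain ⟨u, xhat, hu0, hchain, hxhat⟩ := chainLemma (fun n : {n : PNode X T Y // WFP B W n} => n.1.Gs)
    stepF ⟨root, hrootWF⟩ hW hWne
    (fun n H h1 h2 h3 =>
      ⟨(hstepF n H ⟨h1, h2, h3⟩).1, (hstepF n H ⟨h1, h2, h3⟩).2.1, (hstepF n H ⟨h1, h2, h3⟩).2.2.1⟩)
  have hPost : ∀ k, PostP Y f δ (u k).1 (u (k+1)).1 := by
    intro k
    obtain ⟨H, h1, h2, h3, heq⟩ := hchain k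
    rw [heq]
    exact (hstepF (u k) H ⟨h1, h2, h3⟩).2.2.2
  have huk : ∀ k, (u k).1.k = k := by
    intro k
    induction k with
    | zero => rw [hu0]
    | succ k ih =>
      have h := (hPost k).1
      omega
  set Sfun : ℕ → Set T := fun j => SOf ((u j).1.es j) with hSfundef
  set bfun : ℕ → ↥Y := fun j => ((u (j+1)).1.bds j).1 with hbfundef
  set dfun : ℕ → ↥Y := fun j => ((u (j+1)).1.bds j).2 with hdfundef
  have hes : ∀ j k, j ≤ k → (u k).1.es j = (u j).1.es j := by
    intro j k hjk
    induction k with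
    | zero =>
      have : j = 0 := Nat.le_zero.1 hjk
      subst this; rfl
    | succ k ih =>
      by_cases h : j ≤ k
      · have h2 := (hPost k).2.1 j (by rw [huk k]; exact h)
        rw [h2]
        exact ih h
      · have : j = k + 1 := by omega
        subst this; rfl
  have hSmono : ∀ j, Sfun j ⊆ Sfun (j+1) := by
    intro j
    have h := (hPost j).2.2.1
    rw [huk j] at h
    exact h
  have hSmono' : ∀ i j, i ≤ j → Sfun i ⊆ Sfun j := by
    intro i j hij
    exact monotone_nat_of_le_succ hSmono hij
  have hsep : ∀ j, 5*δ/8 ≤ |f (xhat, bfun j) - f (xhat, dfun j)| := by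
    intro j
    have h := (hPost j).2.2.2.1 xhat (hxhat (j+1))
    rw [huk j] at h
    exact h
  have hbsupp : ∀ j t, t ∉ Sfun (j+1) → (bfun j : T → ℝ) t = 0 := by
    intro j t ht
    have h := (hPost j).2.2.2.2.1
    rw [huk j] at h
    exact h t ht
  have hdsupp : ∀ j t, t ∉ Sfun j → (dfun j : T → ℝ) t = 0 := by
    intro j t ht
    have h := (hPost j).2.2.2.2.2.1
    rw [huk j] at h
    exact h t ht
  have hdue : ∀ j t, (∃ j' ≤ j, ∃ i ≤ j, (u j).1.es j' i = some t) → t ∈ Sfun j →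
      |(dfun j : T → ℝ) t - (bfun j : T → ℝ) t| ≤ (1/2 : ℝ)^j := by
    intro j t htdue htS
    have h := (hPost j).2.2.2.2.2.2
    rw [huk j] at h
    exact h t htdue htS
  set Sinf : Set T := ⋃ j, Sfun j with hSinfdef
  have hbK : ∀ j, bfun j ∈ KS Y Sinf :=
    fun j t ht => hbsupp j t (fun hmem => ht (Set.mem_iUnion.2 ⟨j+1, hmem⟩))
  have hdK : ∀ j, dfun j ∈ KS Y Sinf :=
    fun j t ht => hdsupp j t (fun hmem => ht (Set.mem_iUnion.2 ⟨j, hmem⟩))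
  have hcoord : ∀ t ∈ Sinf,
      Tendsto (fun j => (bfun j : T → ℝ) t - (dfun j : T → ℝ) t) atTop (𝓝 0) := by
    intro t ht
    obtain ⟨j₀, hj₀⟩ := Set.mem_iUnion.1 ht
    obtain ⟨i₀, hi₀⟩ := hj₀
    have hpow : Tendsto (fun j : ℕ => (1/2 : ℝ)^j) atTop (𝓝 0) :=
      tendsto_pow_atTop_nhds_zero_of_lt_one (by norm_num) (by norm_num)
    apply squeeze_zero_norm' ?_ hpow
    rw [eventually_atTop]
    refine ⟨max j₀ i₀, fun j hj => ?_⟩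
    have hj₀j : j₀ ≤ j := le_of_max_le_left hj
    have hi₀j : i₀ ≤ j := le_of_max_le_right hj
    have h1 : (u j).1.es j₀ i₀ = some t := by rw [hes j₀ j hj₀j]; exact hi₀
    have htS : t ∈ Sfun j := hSmono' j₀ j hj₀j ⟨i₀, hi₀⟩
    have h2 := hdue j t ⟨j₀, hj₀j, i₀, hi₀j, h1⟩ htS
    rw [Real.norm_eq_abs, abs_sub_comm]
    exact h2
  -- a cluster point of the pair sequence
  have hKcomp : IsCompact ((KS Y Sinf) ×ˢ (KS Y Sinf)) :=
    (isCompact_KS hYcomp Sinf).prod (isCompact_KS hYcomp Sinf)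
  set seq : ℕ → ↥Y × ↥Y := fun j => (bfun j, dfun j) with hseqdef
  have hseqK : ∀ j, seq j ∈ (KS Y Sinf) ×ˢ (KS Y Sinf) := fun j => ⟨hbK j, hdK j⟩
  have hle : Filter.map seq atTop ≤ 𝓟 ((KS Y Sinf) ×ˢ (KS Y Sinf)) := by
    rw [Filter.le_principal_iff, Filter.mem_map]
    exact Filter.Eventually.of_forall hseqK
  obtain ⟨⟨ystar, zstar⟩, hstarK, hclu⟩ := hKcomp.exists_mapClusterPt (u := seq) hle
  have hyz : ystar = zstar := by
    apply Subtype.ext; funext t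
    by_cases ht : t ∈ Sinf
    · have hφ : Continuous (fun p : ↥Y × ↥Y => ((p.1 : T → ℝ) t) - ((p.2 : T → ℝ) t)) :=
        ((continuous_coord t).comp continuous_fst).sub ((continuous_coord t).comp continuous_snd)
      have hclu2 : MapClusterPt ((ystar : T → ℝ) t - (zstar : T → ℝ) t) atTop
          ((fun p : ↥Y × ↥Y => ((p.1 : T → ℝ) t) - ((p.2 : T → ℝ) t)) ∘ seq) :=
        hclu.continuousAt_comp hφ.continuousAt
      have heq0 : (ystar : T → ℝ) t - (zstar : T → ℝ) t = 0 :=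
        cluster_eq_of_tendsto hclu2 (hcoord t ht) rfl
      exact sub_eq_zero.1 heq0
    · rw [hstarK.1 t ht, hstarK.2 t ht]
  have hψ : Continuous (fun p : ↥Y × ↥Y => f (xhat, p.1) - f (xhat, p.2)) := by
    have h1 : Continuous (fun p : ↥Y × ↥Y => f (xhat, p.1)) := (hf2 xhat).comp continuous_fst
    have h2 : Continuous (fun p : ↥Y × ↥Y => f (xhat, p.2)) := (hf2 xhat).comp continuous_snd
    exact h1.sub h2
  have hclu3 : MapClusterPt ((fun p : ↥Y × ↥Y => f (xhat, p.1) - f (xhat, p.2)) (ystar, zstar))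
      atTop ((fun p : ↥Y × ↥Y => f (xhat, p.1) - f (xhat, p.2)) ∘ seq) :=
    hclu.continuousAt_comp hψ.continuousAt
  have hzero : (fun p : ↥Y × ↥Y => f (xhat, p.1) - f (xhat, p.2)) (ystar, zstar) = 0 := by
    simp only [hyz, sub_self]
  rw [hzero] at hclu3
  obtain ⟨j, hj⟩ := cluster_exists_abs_lt hclu3 (show (0:ℝ) < 5*δ/8 by positivity)
  have hj' : |f (xhat, bfun j) - f (xhat, dfun j)| < 5*δ/8 := hj
  exact absurd (hsep j) (not_le.2 hj')

/-- The density lemma: every nonempty open set contains a nonempty open set on which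
the family `f (·, y)` has uniformly small oscillation. -/
lemma densityLemma [Nonempty ↥Y] (hYcomp : IsCompact Y)
    (hf2 : ∀ x : X, Continuous fun y : ↥Y => f (x, y))
    (hBdense : Dense B)
    (hBsigma : ∀ b ∈ B, {t | (b : T → ℝ) t ≠ 0}.Countable)
    (hBqc : ∀ b ∈ B, QuasiContinuous fun x : X => f (x, b))
    {W : Set X} (hW : IsOpen W) (hWne : W.Nonempty) {ε : ℝ} (hε : 0 < ε) :
    ∃ G : Set X, IsOpen G ∧ G.Nonempty ∧ G ⊆ W ∧
      ∀ x ∈ G, ∀ x' ∈ G, ∀ y : ↥Y, |f (x, y) - f (x', y)| ≤ ε := by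
  obtain ⟨S, hScount, hadm, D, hDB, hDsupp, hDdense, G₁, hG₁o, hG₁ne, hG₁W, htr⟩ :=
    phase1 hYcomp hf2 hBdense hBsigma hBqc hW hWne (δ := ε/4) (by positivity)
  obtain ⟨G, hGo, hGne, hGG₁, hosc⟩ := oscLemma hYcomp hf2 hBqc hScount hDB hDsupp hDdense
    hG₁o hG₁ne (ε := ε/4) (by positivity)
  refine ⟨G, hGo, hGne, hGG₁.trans hG₁W, ?_⟩
  intro x hx x' hx' y
  set ty : ↥Y := ⟨truncf S (y : T → ℝ), hadm y⟩ with htydef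
  have h1 : |f (x, y) - f (x, ty)| ≤ ε/4 := htr x (hGG₁ hx) y
  have h2 : |f (x', y) - f (x', ty)| ≤ ε/4 := htr x' (hGG₁ hx') y
  have h3 : |f (x, ty) - f (x', ty)| ≤ ε/4 :=
    hosc x hx x' hx' ty (fun t ht => truncf_not_mem ht)
  have t1 : |f (x,y) - f (x',y)| ≤ |f (x,y) - f (x,ty)| + |f (x,ty) - f (x',y)| :=
    abs_sub_le _ _ _
  have t2 : |f (x,ty) - f (x',y)| ≤ |f (x,ty) - f (x',ty)| + |f (x',ty) - f (x',y)| :=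
    abs_sub_le _ _ _
  have t3 : |f (x',ty) - f (x',y)| = |f (x',y) - f (x',ty)| := abs_sub_comm _ _
  linarith

end Phase1

end NamProof

/-- Theorem 3.1: Namioka-type theorem for a compact `Y ⊆ [0,1]^T` with a dense
set `B ⊆ Y ∩ Σ` of quasi-continuous sections. -/
theorem namioka_of_dense_sigma_sections {X : Type*} [TopologicalSpace X] [BaireSpace X]
    {T : Type*} (Y : Set (T → ℝ))
    (hYcube : ∀ x ∈ Y, ∀ t, x t ∈ Set.Icc (0 : ℝ) 1)
    (hYcomp : IsCompact Y)
    (f : X × Y → ℝ)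
    (hf2 : ∀ x : X, Continuous fun y : Y => f (x, y))
    (B : Set Y) (hBdense : Dense B)
    (hBsigma : ∀ b ∈ B, {t : T | (b : T → ℝ) t ≠ 0}.Countable)
    (hBqc : ∀ b ∈ B, QuasiContinuous fun x : X => f (x, b)) :
    ∃ A : Set X, Dense A ∧ IsGδ A ∧ ∀ x ∈ A, ∀ y : Y, ContinuousAt f (x, y) := by
  classical
  rcases isEmpty_or_nonempty ↥Y with hY | hY
  · exact ⟨Set.univ, dense_univ, IsGδ.univ, fun x _ y => isEmptyElim y⟩
  · set A : ℕ → Set X := fun m => ⋃₀ {U : Set X | IsOpen U ∧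
      ∀ x ∈ U, ∀ x' ∈ U, ∀ y : ↥Y, |f (x, y) - f (x', y)| ≤ 1/(m+1)} with hAdef
    have hAopen : ∀ m, IsOpen (A m) := fun m => isOpen_sUnion (fun U hU => hU.1)
    have hAdense : ∀ m, Dense (A m) := by
      intro m
      rw [dense_iff_inter_open]
      intro W hW hWne
      obtain ⟨G, hGo, hGne, hGW, hosc⟩ := NamProof.densityLemma hYcomp hf2 hBdense hBsigma hBqc
        hW hWne (ε := 1/(m+1)) (by positivity)
      obtain ⟨x, hx⟩ := hGne
      exact ⟨x, hGW hx, Set.mem_sUnion.2 ⟨G, ⟨hGo, hosc⟩, hx⟩⟩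
    refine ⟨⋂ m, A m, dense_iInter_of_isOpen hAopen hAdense,
      IsGδ.iInter (fun m => (hAopen m).isGδ), ?_⟩
    intro x hx y
    rw [ContinuousAt, Metric.tendsto_nhds]
    intro ε hε
    obtain ⟨m, hm⟩ : ∃ m : ℕ, 1/(m+1 : ℝ) < ε/2 := by
      obtain ⟨m, hm⟩ := exists_nat_gt (2/ε)
      refine ⟨m, ?_⟩
      rw [div_lt_iff₀ (by positivity)]
      rw [div_lt_iff₀ hε] at hm
      nlinarith [hε, (Nat.cast_nonneg m : (0:ℝ) ≤ m)]
    obtain ⟨U, ⟨hUo, hUosc⟩, hxU⟩ := Set.mem_sUnion.1 (Set.mem_iInter.1 hx m)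
    have hcont : ContinuousAt (fun y' : ↥Y => f (x, y')) y := (hf2 x).continuousAt
    have hV : {y' : ↥Y | |f (x, y') - f (x, y)| < ε/2} ∈ 𝓝 y := by
      have := hcont.preimage_mem_nhds (Metric.ball_mem_nhds (f (x,y)) (half_pos hε))
      simpa [Metric.ball, Real.dist_eq] using this
    have hprod : (U ×ˢ {y' : ↥Y | |f (x, y') - f (x, y)| < ε/2}) ∈ 𝓝 ((x, y)) :=
      prod_mem_nhds (hUo.mem_nhds hxU) hV
    filter_upwards [hprod] with p hp
    obtain ⟨hp1, hp2⟩ := hp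
    have h1 : |f (p.1, p.2) - f (x, p.2)| ≤ 1/(m+1) := hUosc p.1 hp1 x hxU p.2
    have h2 : |f (x, p.2) - f (x, y)| < ε/2 := hp2
    rw [Real.dist_eq]
    have t1 : |f (p.1, p.2) - f (x,y)|
        ≤ |f (p.1,p.2) - f (x,p.2)| + |f (x,p.2) - f (x,y)| := abs_sub_le _ _ _
    have hfp : f p = f (p.1, p.2) := rfl
    rw [hfp]
    linarith
end

section
/- Let X be a Baire space and Y a Corson compact (a compact space embeddable into the Σ-subspace of some cube [0,1]^T, where the Σ-subspace consists of points with countable support). Then every function f : X × Y → ℝ that is continuous in the second variable and such that x ↦ f(x,b) is quasi-continuous for all b in some dense subset B ⊆ Y, has the Namioka property. -/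
open Topology

namespace NamiokaCorson

variable {X Y : Type*} [TopologicalSpace X] [TopologicalSpace Y]

/-- All fiber oscillations at `x` are at most `ε`. -/
def Good (f : X × Y → ℝ) (ε : ℝ) (x : X) : Prop :=
  ∀ y : Y, ∃ W O, IsOpen W ∧ IsOpen O ∧ x ∈ W ∧ y ∈ O ∧
    ∀ p ∈ W ×ˢ O, ∀ q ∈ W ×ˢ O, |f p - f q| ≤ ε

lemma isOpen_good [CompactSpace Y] (f : X × Y → ℝ) (ε : ℝ) : IsOpen {x | Good f ε x} := by
  rw [isOpen_iff_forall_mem_open]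
  rintro x (hx : Good f ε x)
  choose W O hW hO hxW hyO hp using hx
  obtain ⟨t, ht⟩ := isCompact_univ.elim_finite_subcover O hO (fun y _ => Set.mem_iUnion.2 ⟨y, hyO y⟩)
  refine ⟨⋂ y ∈ t, W y, ?_, ?_, ?_⟩
  · intro x' hx' y
    have hy : y ∈ ⋃ i ∈ t, O i := ht (Set.mem_univ y)
    obtain ⟨i, hit, hyi⟩ := Set.mem_iUnion₂.1 hy
    exact ⟨W i, O i, hW i, hO i, (Set.mem_iInter₂.1 hx') i hit, hyi, hp i⟩
  · exact Set.Finite.isOpen_biInter t.finite_toSet (fun i _ => hW i)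
  · exact Set.mem_iInter₂.2 fun i _ => hxW i

lemma good_mono (f : X × Y → ℝ) {a b : ℝ} (hab : a ≤ b) {x : X} (h : Good f a x) :
    Good f b x := by
  intro y
  obtain ⟨W, O, hW, hO, hxW, hyO, hpq⟩ := h y
  exact ⟨W, O, hW, hO, hxW, hyO, fun p hp q hq => (hpq p hp q hq).trans hab⟩

lemma good_continuousAt (f : X × Y → ℝ) (x : X)
    (h : ∀ ε > (0:ℝ), Good f ε x) (y : Y) : ContinuousAt f (x, y) := by
  rw [ContinuousAt, Metric.tendsto_nhds]
  intro ε hε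
  obtain ⟨W, O, hW, hO, hxW, hyO, hp⟩ := h (ε/2) (by linarith) y
  have hmem : W ×ˢ O ∈ 𝓝 (x, y) := prod_mem_nhds (hW.mem_nhds hxW) (hO.mem_nhds hyO)
  filter_upwards [hmem] with p hpW
  have hxy : (x, y) ∈ W ×ˢ O := ⟨hxW, hyO⟩
  have := hp p hpW (x, y) hxy
  rw [Real.dist_eq]
  linarith

/-- A quasi-continuous real function on a Baire space is continuous at a dense Gδ of points. -/
lemma qc_dense_gdelta [BaireSpace X] (F : X → ℝ) (h : QuasiContinuous F) :
    ∃ A : Set X, Dense A ∧ IsGδ A ∧ ∀ x ∈ A, ContinuousAt F x := by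
  set D : ℕ → Set X := fun n =>
    {x | ∃ G : Set X, IsOpen G ∧ x ∈ G ∧ ∀ p ∈ G, ∀ q ∈ G, |F p - F q| ≤ ((n:ℝ)+1)⁻¹}
  have hDo : ∀ n, IsOpen (D n) := by
    intro n
    rw [isOpen_iff_forall_mem_open]
    rintro x ⟨G, hG, hxG, hpq⟩
    exact ⟨G, fun x' hx' => ⟨G, hG, hx', hpq⟩, hG, hxG⟩
  have hDd : ∀ n, Dense (D n) := by
    intro n
    rw [dense_iff_inter_open]
    intro U hU ⟨x, hxU⟩
    have hpos : (0:ℝ) < (((n:ℝ)+1)⁻¹)/3 := by positivity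
    obtain ⟨G, hG, hGne, hGU, him⟩ := h x U (hU.mem_nhds hxU)
      (Metric.ball (F x) ((((n:ℝ)+1)⁻¹)/3)) (Metric.ball_mem_nhds _ hpos)
    obtain ⟨z, hz⟩ := hGne
    refine ⟨z, ⟨hGU hz, G, hG, hz, ?_⟩⟩
    intro p hp q hq
    have h1 := him ⟨p, hp, rfl⟩
    have h2 := him ⟨q, hq, rfl⟩
    rw [Metric.mem_ball, Real.dist_eq] at h1 h2
    have h3 : |F p - F q| ≤ |F p - F x| + |F x - F q| := abs_sub_le _ _ _
    rw [abs_sub_comm (F x)] at h3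
    linarith
  refine ⟨⋂ n, D n, dense_iInter_of_isOpen hDo hDd, .iInter fun n => (hDo n).isGδ, ?_⟩
  intro x hx
  rw [ContinuousAt, Metric.tendsto_nhds]
  intro ε hε
  obtain ⟨n, hn⟩ := exists_nat_gt ε⁻¹
  have hn' : ((n:ℝ)+1)⁻¹ < ε := by
    rw [inv_lt_comm₀ (by positivity) hε]
    linarith
  obtain ⟨G, hG, hxG, hpq⟩ := Set.mem_iInter.1 hx n
  filter_upwards [hG.mem_nhds hxG] with p hp
  rw [Real.dist_eq]
  exact lt_of_le_of_lt (hpq p hp x hxG) hn'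

end NamiokaCorson

set_option linter.unusedSectionVars false

namespace NamiokaCorson

variable {X Y T : Type*} [TopologicalSpace X] [TopologicalSpace Y]
variable {e : Y → T → ℝ}

lemma pi_exists_box {O : Set (T → ℝ)} (hO : IsOpen O) {z : T → ℝ} (hz : z ∈ O) :
    ∃ (F : Finset T) (δ : ℝ), 0 < δ ∧ ∀ w : T → ℝ, (∀ t ∈ F, |w t - z t| < δ) → w ∈ O := by
  obtain ⟨I, u, hu, hpi⟩ := isOpen_pi_iff.1 hO z hz
  have h2 : ∀ t ∈ I, ∃ δ > 0, Metric.ball (z t) δ ⊆ u t := fun t ht =>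
    Metric.isOpen_iff.1 (hu t ht).1 _ (hu t ht).2
  classical
  set g : T → ℝ := fun t => if h : t ∈ I then (h2 t h).choose else 1 with hg
  have hgpos : ∀ t, 0 < g t := by
    intro t
    by_cases h : t ∈ I <;> simp [hg, h]
    exact (h2 t h).choose_spec.1
  have hgball : ∀ t ∈ I, Metric.ball (z t) (g t) ⊆ u t := by
    intro t h
    simp only [hg, dif_pos h]
    exact (h2 t h).choose_spec.2
  by_cases hI : I.Nonempty
  · refine ⟨I, I.inf' hI g, ?_, ?_⟩
    · rw [Finset.lt_inf'_iff]
      exact fun t _ => hgpos t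
    · intro w hw
      refine hpi (Set.mem_pi.2 fun t ht => hgball t ht ?_)
      rw [Metric.mem_ball, Real.dist_eq]
      exact lt_of_lt_of_le (hw t ht) (Finset.inf'_le _ ht)
  · refine ⟨I, 1, one_pos, fun w _ => hpi (Set.mem_pi.2 fun t ht => absurd ⟨t, ht⟩ hI)⟩

lemma exists_box_subset (he : Topology.IsEmbedding e) {O : Set Y} (hO : IsOpen O)
    {y : Y} (hy : y ∈ O) :
    ∃ (F : Finset T) (δ : ℝ), 0 < δ ∧ ∀ y' : Y, (∀ t ∈ F, |e y' t - e y t| < δ) → y' ∈ O := by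
  have h1 : O ∈ 𝓝 y := hO.mem_nhds hy
  rw [he.isInducing.nhds_eq_comap, Filter.mem_comap] at h1
  obtain ⟨N, hN, hsub⟩ := h1
  obtain ⟨U, hUN, hUopen, hyU⟩ := mem_nhds_iff.1 hN
  obtain ⟨F, δ, hδ, hbox⟩ := pi_exists_box hUopen hyU
  exact ⟨F, δ, hδ, fun y' h => hsub (hUN (hbox (e y') h))⟩

lemma isOpen_box (hc : Continuous e) (F : Finset T) (c : T → ℝ) (δ : ℝ) :
    IsOpen {y : Y | ∀ t ∈ F, |e y t - c t| < δ} := by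
  have : {y : Y | ∀ t ∈ F, |e y t - c t| < δ} = ⋂ t ∈ F, {y : Y | |e y t - c t| < δ} := by
    ext y; simp
  rw [this]
  refine Set.Finite.isOpen_biInter F.finite_toSet fun t _ => ?_
  exact isOpen_lt (continuous_abs.comp (((continuous_apply t).comp hc).sub continuous_const)) continuous_const

lemma closure_support {A : Set Y} {S : Set T} (hc : Continuous e)
    (h : ∀ a ∈ A, ∀ t ∉ S, e a t = 0) :
    ∀ y ∈ closure A, ∀ t ∉ S, e y t = 0 := by
  intro y hy t ht
  have hcl : IsClosed {y' : Y | e y' t = 0} :=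
    isClosed_eq ((continuous_apply t).comp hc) continuous_const
  exact hcl.closure_subset_iff.2 (fun a ha => h a ha t ht) hy

lemma mem_closure_of_box (he : Topology.IsEmbedding e) {A : Set Y} {y : Y}
    (h : ∀ (F : Finset T) (δ : ℝ), 0 < δ → ∃ a ∈ A, ∀ t ∈ F, |e a t - e y t| < δ) :
    y ∈ closure A := by
  rw [mem_closure_iff]
  intro O hO hyO
  obtain ⟨F, δ, hδ, hbox⟩ := exists_box_subset he hO hyO
  obtain ⟨a, haA, ha⟩ := h F δ hδ
  exact ⟨a, hbox a ha, haA⟩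

lemma pi_mem_closure {A : Set (T → ℝ)} {z : T → ℝ}
    (h : ∀ (F : Finset T) (δ : ℝ), 0 < δ → ∃ a ∈ A, ∀ t ∈ F, |a t - z t| < δ) :
    z ∈ closure A := by
  rw [mem_closure_iff]
  intro O hO hzO
  obtain ⟨F, δ, hδ, hbox⟩ := pi_exists_box hO hzO
  obtain ⟨a, haA, ha⟩ := h F δ hδ
  exact ⟨a, hbox a ha, haA⟩

end NamiokaCorson


noncomputable section
open scoped Classical
namespace Close

variable {Y T : Type*} [TopologicalSpace Y]

abbrev Lam : Type := List ℚ × ℚ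

variable (e : Y → T → ℝ) (B : Set Y) (t0 : T) (y0 b0 : Y)
variable (hsupp : ∀ y : Y, {t : T | e y t ≠ 0}.Countable)

/-- enumeration of the support of `y` (padded with `t0`) -/
def σe (y : Y) : ℕ → T :=
  (((hsupp y).insert t0).exists_eq_range (Set.insert_nonempty _ _)).choose

lemma σe_spec (y : Y) : insert t0 {t : T | e y t ≠ 0} = Set.range (σe e t0 hsupp y) :=
  (((hsupp y).insert t0).exists_eq_range (Set.insert_nonempty _ _)).choose_spec

lemma σe_mem {y : Y} {t : T} (h : e y t ≠ 0) : ∃ i, σe e t0 hsupp y i = t := by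
  have : t ∈ insert t0 {t : T | e y t ≠ 0} := Set.mem_insert_iff.2 (Or.inr h)
  rw [σe_spec e t0 hsupp y] at this
  exact this

def cond (pool : Set Y) (s : ℕ → T) (lam : Lam) : Prop :=
  ∃ w ∈ pool, ∀ i < lam.1.length, |e w (s i) - (lam.1.getD i 0 : ℝ)| < (lam.2 : ℝ)

def wit (pool : Set Y) (dflt : Y) (s : ℕ → T) (lam : Lam) : Y :=
  if h : cond e pool s lam then h.choose else dflt

lemma wit_mem {pool : Set Y} {dflt : Y} (hd : dflt ∈ pool) (s : ℕ → T) (lam : Lam) :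
    wit e pool dflt s lam ∈ pool := by
  rw [wit]; split
  · next h => exact h.choose_spec.1
  · exact hd

lemma wit_spec {pool : Set Y} {dflt : Y} {s : ℕ → T} {lam : Lam}
    (h : cond e pool s lam) :
    ∀ i < lam.1.length, |e (wit e pool dflt s lam) (s i) - (lam.1.getD i 0 : ℝ)| < (lam.2 : ℝ) := by
  rw [wit, dif_pos h]
  exact h.choose_spec.2

def dec : ℕ → Lam := fun n => (Denumerable.eqv Lam).symm n

def enc : Lam → ℕ := fun l => Denumerable.eqv Lam l

def nxt (s : ℕ → T) : ℕ → T := fun n =>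
  if n.unpair.1.unpair.1 = 0 then s n.unpair.2
  else if n.unpair.1.unpair.1 = 1 then
    σe e t0 hsupp (wit e Set.univ y0 s (dec n.unpair.1.unpair.2)) n.unpair.2
  else σe e t0 hsupp (wit e B b0 s (dec n.unpair.1.unpair.2)) n.unpair.2

lemma nxt_self (s : ℕ → T) (j : ℕ) : nxt e B t0 y0 b0 hsupp s (Nat.pair (Nat.pair 0 0) j) = s j := by
  simp [nxt, Nat.unpair_pair]

lemma nxt_univ (s : ℕ → T) (c j : ℕ) :
    nxt e B t0 y0 b0 hsupp s (Nat.pair (Nat.pair 1 c) j)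
      = σe e t0 hsupp (wit e Set.univ y0 s (dec c)) j := by
  simp [nxt, Nat.unpair_pair]

lemma nxt_B (s : ℕ → T) (c j : ℕ) :
    nxt e B t0 y0 b0 hsupp s (Nat.pair (Nat.pair 2 c) j)
      = σe e t0 hsupp (wit e B b0 s (dec c)) j := by
  simp [nxt, Nat.unpair_pair]

variable (s0 : ℕ → T)

def st : ℕ → ℕ → T := fun k => (nxt e B t0 y0 b0 hsupp)^[k] s0

lemma st_zero : st e B t0 y0 b0 hsupp s0 0 = s0 := rfl

lemma st_succ (k : ℕ) :
    st e B t0 y0 b0 hsupp s0 (k+1) = nxt e B t0 y0 b0 hsupp (st e B t0 y0 b0 hsupp s0 k) :=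
  Function.iterate_succ_apply' _ _ _

lemma st_mono_succ (k : ℕ) :
    Set.range (st e B t0 y0 b0 hsupp s0 k) ⊆ Set.range (st e B t0 y0 b0 hsupp s0 (k+1)) := by
  rintro t ⟨j, rfl⟩
  exact ⟨Nat.pair (Nat.pair 0 0) j, by rw [st_succ, nxt_self]⟩

lemma st_mono {k k' : ℕ} (h : k ≤ k') :
    Set.range (st e B t0 y0 b0 hsupp s0 k) ⊆ Set.range (st e B t0 y0 b0 hsupp s0 k') := by
  induction h with
  | refl => exact subset_rfl
  | step _ ih => exact ih.trans (st_mono_succ e B t0 y0 b0 hsupp s0 _)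

def SS : ℕ → T := fun n => st e B t0 y0 b0 hsupp s0 n.unpair.1 n.unpair.2

def QQ : ℕ → Y := fun n => wit e B b0 (st e B t0 y0 b0 hsupp s0 n.unpair.1) (dec n.unpair.2)

lemma st_sub_SS (k : ℕ) :
    Set.range (st e B t0 y0 b0 hsupp s0 k) ⊆ Set.range (SS e B t0 y0 b0 hsupp s0) := by
  rintro t ⟨j, rfl⟩
  exact ⟨Nat.pair k j, by simp [SS, Nat.unpair_pair]⟩

lemma SS_eq (m : ℕ) : SS e B t0 y0 b0 hsupp s0 m = st e B t0 y0 b0 hsupp s0 m.unpair.1 m.unpair.2 := rfl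

lemma core {pool : Set Y} {dflt : Y} (z : T → ℝ)
    (hzsupp : ∀ t, (∀ m, SS e B t0 y0 b0 hsupp s0 m ≠ t) → z t = 0)
    (hzreal : ∀ (k N : ℕ) (δ : ℝ), 0 < δ →
      ∃ w ∈ pool, ∀ i < N,
        |e w (st e B t0 y0 b0 hsupp s0 k i) - z (st e B t0 y0 b0 hsupp s0 k i)| < δ)
    (hwsupp : ∀ (k : ℕ) (lam : Lam) (t : T),
      e (wit e pool dflt (st e B t0 y0 b0 hsupp s0 k) lam) t ≠ 0 →
        ∃ m, SS e B t0 y0 b0 hsupp s0 m = t)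
    (F : Finset T) (δr : ℝ) (hδr : 0 < δr) :
    ∃ (k : ℕ) (lam : Lam), cond e pool (st e B t0 y0 b0 hsupp s0 k) lam ∧
      ∀ t ∈ F, |e (wit e pool dflt (st e B t0 y0 b0 hsupp s0 k) lam) t - z t| < δr := by
  classical
  have hstage : ∃ K, ∀ t ∈ F, (∃ m, SS e B t0 y0 b0 hsupp s0 m = t) →
      t ∈ Set.range (st e B t0 y0 b0 hsupp s0 K) := by
    induction F using Finset.induction_on with
    | empty => exact ⟨0, by simp⟩
    | @insert a Fs ha ih =>
      obtain ⟨K, hK⟩ := ih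
      by_cases hmem : ∃ m, SS e B t0 y0 b0 hsupp s0 m = a
      · obtain ⟨m, hm⟩ := hmem
        refine ⟨max K m.unpair.1, ?_⟩
        intro t ht _hex
        rcases Finset.mem_insert.1 ht with rfl | hts
        · exact st_mono e B t0 y0 b0 hsupp s0 (le_max_right _ _) ⟨m.unpair.2, hm⟩
        · rcases Classical.em (∃ m', SS e B t0 y0 b0 hsupp s0 m' = t) with hex | hex
          · exact st_mono e B t0 y0 b0 hsupp s0 (le_max_left _ _) (hK t hts hex)
          · exact absurd _hex hex
      · refine ⟨K, ?_⟩
        intro t ht hex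
        rcases Finset.mem_insert.1 ht with rfl | hts
        · exact absurd hex hmem
        · exact hK t hts hex
  obtain ⟨K, hK⟩ := hstage
  set σK := st e B t0 y0 b0 hsupp s0 K with hσK
  have hidx : ∀ t : T, ∃ i, (t ∈ Set.range σK → σK i = t) := by
    intro t
    by_cases h : t ∈ Set.range σK
    · obtain ⟨i, hi⟩ := h; exact ⟨i, fun _ => hi⟩
    · exact ⟨0, fun hc => absurd hc h⟩
  choose idx hidx using hidx
  set N := (F.sup idx) + 1 with hN
  obtain ⟨δq, hδq0, hδq⟩ := exists_rat_btwn (show (0:ℝ) < δr/3 by linarith)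
  rw [Rat.cast_pos] at hδq0
  have hδq0' : (0:ℝ) < (δq:ℝ) := by exact_mod_cast hδq0
  have happrox : ∀ i : ℕ, ∃ q : ℚ, |z (σK i) - q| < (δq:ℝ)/2 :=
    fun i => exists_rat_near (z (σK i)) (by linarith)
  choose ctr hctr using happrox
  set l : List ℚ := List.ofFn (fun i : Fin N => ctr i) with hl
  set lam : Lam := (l, δq) with hlam
  have hlen : l.length = N := List.length_ofFn
  have hgetD : ∀ i, i < N → l.getD i 0 = ctr i := by
    intro i hi
    have hi' : i < l.length := by rw [hlen]; exact hi
    rw [List.getD_eq_getElem l 0 hi']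
    simp only [hl, List.getElem_ofFn]
  have hcond : cond e pool σK lam := by
    obtain ⟨w, hw, hwi⟩ := hzreal K N ((δq:ℝ)/2) (by linarith)
    refine ⟨w, hw, ?_⟩
    intro i hi
    rw [hlen] at hi
    rw [hgetD i hi]
    have h1 := hwi i hi
    have h2 := hctr i
    calc |e w (σK i) - (ctr i : ℝ)|
        ≤ |e w (σK i) - z (σK i)| + |z (σK i) - (ctr i : ℝ)| := abs_sub_le _ _ _
      _ < (δq:ℝ)/2 + (δq:ℝ)/2 := add_lt_add h1 h2
      _ = (δq:ℝ) := by ring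
  refine ⟨K, lam, hcond, ?_⟩
  intro t htF
  by_cases hts : ∃ m, SS e B t0 y0 b0 hsupp s0 m = t
  · have htr : t ∈ Set.range σK := hK t htF hts
    have hit : σK (idx t) = t := hidx t htr
    have hiN : idx t < N := Nat.lt_succ_of_le (Finset.le_sup htF)
    have hw1 := wit_spec e (dflt := dflt) hcond (idx t) (by rw [hlen]; exact hiN)
    rw [hgetD _ hiN] at hw1
    have hw2 := hctr (idx t)
    rw [hit] at hw1 hw2
    calc |e (wit e pool dflt σK lam) t - z t|
        ≤ |e (wit e pool dflt σK lam) t - (ctr (idx t) : ℝ)| + |(ctr (idx t) : ℝ) - z t| := abs_sub_le _ _ _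
      _ < (δq:ℝ) + (δq:ℝ)/2 := by rw [abs_sub_comm ((ctr (idx t) : ℝ))]; exact add_lt_add hw1 hw2
      _ < δr := by linarith
  · push_neg at hts
    have hz0 : z t = 0 := hzsupp t hts
    have hw0 : e (wit e pool dflt σK lam) t = 0 := by
      by_contra h
      obtain ⟨m, hm⟩ := hwsupp K lam t h
      exact hts m hm
    rw [hz0, hw0]
    simpa using hδr

lemma dec_encode (lam : Lam) : dec (enc lam) = lam := Equiv.symm_apply_apply _ _

lemma supp_wit_univ (k : ℕ) (lam : Lam) (t : T)
    (h : e (wit e Set.univ y0 (st e B t0 y0 b0 hsupp s0 k) lam) t ≠ 0) :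
    ∃ m, SS e B t0 y0 b0 hsupp s0 m = t := by
  obtain ⟨i, hi⟩ := σe_mem e t0 hsupp h
  refine ⟨Nat.pair (k+1) (Nat.pair (Nat.pair 1 (enc lam)) i), ?_⟩
  rw [SS_eq, Nat.unpair_pair]
  simp only [st_succ, nxt_univ]
  rw [dec_encode]
  exact hi

lemma supp_wit_B (k : ℕ) (lam : Lam) (t : T)
    (h : e (wit e B b0 (st e B t0 y0 b0 hsupp s0 k) lam) t ≠ 0) :
    ∃ m, SS e B t0 y0 b0 hsupp s0 m = t := by
  obtain ⟨i, hi⟩ := σe_mem e t0 hsupp h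
  refine ⟨Nat.pair (k+1) (Nat.pair (Nat.pair 2 (enc lam)) i), ?_⟩
  rw [SS_eq, Nat.unpair_pair]
  simp only [st_succ, nxt_B]
  rw [dec_encode]
  exact hi

include t0 y0 hsupp in
lemma close [CompactSpace Y] (he : Topology.IsEmbedding e)
    (hB : Dense B) (hb0 : b0 ∈ B) :
    ∃ (S : ℕ → T) (Q : ℕ → Y),
      (∀ n, ∃ m, S m = s0 n) ∧
      (∀ n, Q n ∈ B) ∧
      (∀ n t, e (Q n) t ≠ 0 → ∃ m, S m = t) ∧
      (∀ y : Y, ∃ k : Y, ∀ t, e k t = if ∃ m, S m = t then e y t else 0) ∧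
      (∀ y : Y, (∀ t, (∀ m, S m ≠ t) → e y t = 0) → y ∈ closure (Set.range Q)) := by
  classical
  refine ⟨SS e B t0 y0 b0 hsupp s0, QQ e B t0 y0 b0 hsupp s0, ?_, ?_, ?_, ?_, ?_⟩
  · intro n
    exact ⟨Nat.pair 0 n, by rw [SS_eq, Nat.unpair_pair]; rfl⟩
  · intro n
    exact wit_mem e hb0 _ _
  · intro n t h
    exact supp_wit_B e B t0 y0 b0 hsupp s0 n.unpair.1 (dec n.unpair.2) t h
  · intro y
    set z : T → ℝ := fun t => if ∃ m, SS e B t0 y0 b0 hsupp s0 m = t then e y t else 0 with hz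
    have h1 : z ∈ closure (e '' Set.univ) := by
      apply NamiokaCorson.pi_mem_closure
      intro F δ hδ
      obtain ⟨k, lam, hcond, hval⟩ := core e B t0 y0 b0 hsupp s0 (pool := Set.univ) (dflt := y0) z
        (by
          intro t ht
          simp only [hz]
          rw [if_neg]
          push_neg
          exact ht)
        (by
          intro k N δ' hδ'
          refine ⟨y, Set.mem_univ y, ?_⟩
          intro i _
          have hm : ∃ m, SS e B t0 y0 b0 hsupp s0 m = st e B t0 y0 b0 hsupp s0 k i :=
            st_sub_SS e B t0 y0 b0 hsupp s0 k ⟨i, rfl⟩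
          simp only [hz, if_pos hm, sub_self, abs_zero]
          exact hδ')
        (supp_wit_univ e B t0 y0 b0 hsupp s0) F δ hδ
      exact ⟨e (wit e Set.univ y0 (st e B t0 y0 b0 hsupp s0 k) lam),
        ⟨_, Set.mem_univ _, rfl⟩, hval⟩
    have h2 : IsClosed (e '' Set.univ) := (isCompact_univ.image he.continuous).isClosed
    rw [h2.closure_eq] at h1
    obtain ⟨kY, -, hkY⟩ := h1
    exact ⟨kY, fun t => congrFun hkY t⟩
  · intro y hy
    apply NamiokaCorson.mem_closure_of_box he
    intro F δ hδ
    obtain ⟨k, lam, hcond, hval⟩ := core e B t0 y0 b0 hsupp s0 (pool := B) (dflt := b0) (e y)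
      (fun t ht => hy t ht)
      (by
        intro k N δ' hδ'
        set Fin' : Finset T := (Finset.range N).image (st e B t0 y0 b0 hsupp s0 k) with hFin
        have hopen : IsOpen {w : Y | ∀ t ∈ Fin', |e w t - e y t| < δ'} :=
          NamiokaCorson.isOpen_box he.continuous Fin' (e y) δ'
        have hne : {w : Y | ∀ t ∈ Fin', |e w t - e y t| < δ'}.Nonempty :=
          ⟨y, fun t _ => by simpa using hδ'⟩
        obtain ⟨b, hbB, hbbox⟩ := hB.exists_mem_open hopen hne
        refine ⟨b, hbB, ?_⟩
        intro i hi
        exact hbbox _ (Finset.mem_image.2 ⟨i, Finset.mem_range.2 hi, rfl⟩))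
      (supp_wit_B e B t0 y0 b0 hsupp s0) F δ hδ
    refine ⟨wit e B b0 (st e B t0 y0 b0 hsupp s0 k) lam, ?_, hval⟩
    refine ⟨Nat.pair k (enc lam), ?_⟩
    rw [QQ, Nat.unpair_pair]
    simp only []
    rw [dec_encode]

end Close
end

noncomputable section
namespace Dmetric
open scoped Classical

variable {Y T : Type*} [TopologicalSpace Y]
variable (e : Y → T → ℝ)

lemma min1_tri (a b c : ℝ) : min 1 |a - c| ≤ min 1 |a - b| + min 1 |b - c| := by
  rcases le_total 1 |a - b| with h | h
  · have h1 : min 1 |a-c| ≤ 1 := min_le_left _ _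
    have h2 : (0:ℝ) ≤ min 1 |b - c| := le_min zero_le_one (abs_nonneg _)
    have h3 : min 1 |a-b| = 1 := min_eq_left h
    linarith
  · rcases le_total 1 |b - c| with h' | h'
    · have h1 : min 1 |a-c| ≤ 1 := min_le_left _ _
      have h2 : (0:ℝ) ≤ min 1 |a - b| := le_min zero_le_one (abs_nonneg _)
      have h3 : min 1 |b-c| = 1 := min_eq_left h'
      linarith
    · have h1 : min 1 |a-b| = |a-b| := min_eq_right h
      have h2 : min 1 |b-c| = |b-c| := min_eq_right h'
      have h3 : |a - c| ≤ |a-b| + |b-c| := abs_sub_le _ _ _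
      have h4 : min 1 |a-c| ≤ |a-c| := min_le_right _ _
      linarith

def dm (u : ℕ → T) (y y' : Y) : ℝ :=
  ∑' i, (1/2 : ℝ)^i * min 1 |e y (u i) - e y' (u i)|

lemma dm_term_nonneg (u : ℕ → T) (y y' : Y) (i : ℕ) :
    0 ≤ (1/2 : ℝ)^i * min 1 |e y (u i) - e y' (u i)| :=
  mul_nonneg (by positivity) (le_min zero_le_one (abs_nonneg _))

lemma dm_term_le (u : ℕ → T) (y y' : Y) (i : ℕ) :
    (1/2 : ℝ)^i * min 1 |e y (u i) - e y' (u i)| ≤ (1/2 : ℝ)^i := by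
  nth_rewrite 2 [show ((1:ℝ)/2)^i = (1/2:ℝ)^i * 1 by ring]
  exact mul_le_mul_of_nonneg_left (min_le_left _ _) (by positivity)

lemma dm_summable (u : ℕ → T) (y y' : Y) :
    Summable (fun i => (1/2 : ℝ)^i * min 1 |e y (u i) - e y' (u i)|) := by
  refine Summable.of_nonneg_of_le (dm_term_nonneg e u y y') (dm_term_le e u y y') ?_
  exact summable_geometric_of_lt_one (by norm_num) (by norm_num)

lemma dm_nonneg (u : ℕ → T) (y y' : Y) : 0 ≤ dm e u y y' :=
  tsum_nonneg (dm_term_nonneg e u y y')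

lemma dm_symm (u : ℕ → T) (y y' : Y) : dm e u y y' = dm e u y' y := by
  unfold dm
  congr 1; funext i; rw [abs_sub_comm]

lemma dm_self (u : ℕ → T) (y : Y) : dm e u y y = 0 := by
  unfold dm
  simp

lemma dm_triangle (u : ℕ → T) (y y' y'' : Y) :
    dm e u y y'' ≤ dm e u y y' + dm e u y' y'' := by
  unfold dm
  rw [← Summable.tsum_add (dm_summable e u y y') (dm_summable e u y' y'')]
  refine Summable.tsum_le_tsum ?_ (dm_summable e u y y'') ((dm_summable e u y y').add (dm_summable e u y' y''))
  intro i
  rw [← mul_add]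
  exact mul_le_mul_of_nonneg_left (min1_tri _ _ _) (by positivity)

lemma dm_continuous (hc : Continuous e) (u : ℕ → T) :
    Continuous (fun p : Y × Y => dm e u p.1 p.2) := by
  apply continuous_tsum (u := fun i => (1/2:ℝ)^i)
  · intro i
    have h1 : Continuous fun p : Y × Y => e p.1 (u i) :=
      (continuous_apply (u i)).comp (hc.comp continuous_fst)
    have h2 : Continuous fun p : Y × Y => e p.2 (u i) :=
      (continuous_apply (u i)).comp (hc.comp continuous_snd)
    exact continuous_const.mul (continuous_const.min ((h1.sub h2).abs))
  · exact summable_geometric_of_lt_one (by norm_num) (by norm_num)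
  · intro i p
    rw [Real.norm_eq_abs, abs_of_nonneg (dm_term_nonneg e u _ _ i)]
    exact dm_term_le e u _ _ i

lemma dm_cont_right (hc : Continuous e) (u : ℕ → T) (c : Y) :
    Continuous fun y' : Y => dm e u c y' :=
  (dm_continuous e hc u).comp (continuous_const.prodMk continuous_id)

lemma dm_eq_zero (he : Topology.IsEmbedding e) (u : ℕ → T) {y y' : Y}
    (hy : ∀ t, (∀ i, u i ≠ t) → e y t = 0) (hy' : ∀ t, (∀ i, u i ≠ t) → e y' t = 0)
    (h : dm e u y y' = 0) : y = y' := by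
  apply he.injective
  funext t
  by_cases ht : ∃ i, u i = t
  · obtain ⟨i, rfl⟩ := ht
    have hterm : (1/2 : ℝ)^i * min 1 |e y (u i) - e y' (u i)| = 0 := by
      have hle := Summable.le_tsum (dm_summable e u y y') i (fun j _ => dm_term_nonneg e u y y' j)
      have := dm_term_nonneg e u y y' i
      unfold dm at h
      linarith [hle.trans_eq h]
    have h2 : min 1 |e y (u i) - e y' (u i)| = 0 := by
      have hp : (0:ℝ) < (1/2:ℝ)^i := by positivity
      rcases mul_eq_zero.1 hterm with h | h
      · exact absurd h hp.ne'
      · exact h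
    have h3 : |e y (u i) - e y' (u i)| = 0 := by
      rcases min_eq_iff.1 h2 with ⟨h4, -⟩ | ⟨h4, -⟩
      · norm_num at h4
      · exact h4
    have := abs_eq_zero.1 h3
    linarith
  · push_neg at ht
    rw [hy t ht, hy' t ht]

lemma dm_capture (he : Topology.IsEmbedding e) [CompactSpace Y] (u : ℕ → T) {K : Set Y}
    (hK : IsCompact K) (hKsupp : ∀ y ∈ K, ∀ t, (∀ i, u i ≠ t) → e y t = 0)
    {y : Y} (hyK : y ∈ K) {O : Set Y} (hO : IsOpen O) (hyO : y ∈ O) :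
    ∃ ρ > 0, ∀ y' ∈ K, dm e u y y' < ρ → y' ∈ O := by
  by_cases hC : (K \ O).Nonempty
  · have hCc : IsCompact (K \ O) := hK.diff hO
    have hcont : ContinuousOn (fun y' => dm e u y y') (K \ O) :=
      (dm_cont_right e he.continuous u y).continuousOn
    obtain ⟨c, hcC, hcmin⟩ := hCc.exists_isMinOn hC hcont
    refine ⟨dm e u y c, ?_, ?_⟩
    · rcases lt_or_eq_of_le (dm_nonneg e u y c) with h | h
      · exact h
      · exfalso
        have : y = c := dm_eq_zero e he u (hKsupp y hyK) (hKsupp c hcC.1) h.symm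
        exact hcC.2 (this ▸ hyO)
    · intro y' hy'K hlt
      by_contra hy'O
      exact absurd (hcmin ⟨hy'K, hy'O⟩) (not_le.2 hlt)
  · rw [Set.not_nonempty_iff_eq_empty, Set.diff_eq_empty] at hC
    exact ⟨1, one_pos, fun y' hy' _ => hC hy'⟩

lemma dm_unif_mod (he : Topology.IsEmbedding e) [CompactSpace Y] (u : ℕ → T) {K : Set Y}
    (hK : IsCompact K) (hKsupp : ∀ y ∈ K, ∀ t, (∀ i, u i ≠ t) → e y t = 0)
    (g : Y → ℝ) (hg : Continuous g) {η : ℝ} (hη : 0 < η) :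
    ∃ m : ℕ, ∀ y ∈ K, ∀ y' ∈ K, dm e u y y' ≤ (1:ℝ)/(m+1) → |g y - g y'| ≤ η := by
  by_cases hKne : K.Nonempty
  · have hρ : ∀ c : Y, c ∈ K → ∃ ρ > 0, ∀ y' ∈ K, dm e u c y' < ρ → |g y' - g c| < η/2 := by
      intro c hc
      have hO : IsOpen {y' | |g y' - g c| < η/2} :=
        isOpen_lt (continuous_abs.comp ((hg.sub continuous_const))) continuous_const
      exact dm_capture e he u hK hKsupp hc hO (by change |g c - g c| < η/2; simp only [sub_self, abs_zero]; positivity)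
    classical
    set ρf : Y → ℝ := fun c => if h : c ∈ K then (hρ c h).choose else 1 with hρf
    have hρf_pos : ∀ c, 0 < ρf c := by
      intro c
      by_cases h : c ∈ K <;> simp [hρf, h]
      exact (hρ c h).choose_spec.1
    have hρf_spec : ∀ c ∈ K, ∀ y' ∈ K, dm e u c y' < ρf c → |g y' - g c| < η/2 := by
      intro c hc
      simp only [hρf, dif_pos hc]
      exact (hρ c hc).choose_spec.2
    have hcover : K ⊆ ⋃ c : ↥K, {y' | dm e u c.1 y' < ρf c.1 / 2} := by
      intro y hy
      exact Set.mem_iUnion.2 ⟨⟨y, hy⟩, by simpa [dm_self] using half_pos (hρf_pos y)⟩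
    obtain ⟨tf, htf⟩ := hK.elim_finite_subcover _
      (fun c : ↥K => isOpen_lt (dm_cont_right e he.continuous u c.1) continuous_const) hcover
    have htfne : tf.Nonempty := by
      obtain ⟨y, hy⟩ := hKne
      have := htf hy
      rw [Set.mem_iUnion₂] at this
      obtain ⟨c, hct, -⟩ := this
      exact ⟨c, hct⟩
    set ρmin := tf.inf' htfne (fun c => ρf c.1 / 2) with hρmin
    have hρmin_pos : 0 < ρmin := by
      rw [hρmin, Finset.lt_inf'_iff]
      exact fun c _ => half_pos (hρf_pos c.1)
    obtain ⟨m, hm⟩ := exists_nat_gt (1/ρmin)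
    refine ⟨m, ?_⟩
    intro y hy y' hy' hdm
    have h1m : (0:ℝ) < (m:ℝ)+1 := by positivity
    have hinv : (1:ℝ)/((m:ℝ)+1) < ρmin := by
      rw [div_lt_iff₀ h1m]
      rw [div_lt_iff₀ hρmin_pos] at hm
      nlinarith
    have := htf hy
    rw [Set.mem_iUnion₂] at this
    obtain ⟨c, hct, hyc⟩ := this
    have hcρ : ρf c.1 / 2 ≥ ρmin := Finset.inf'_le _ hct
    have hyc' : dm e u c.1 y < ρf c.1 := by
      have : dm e u c.1 y < ρf c.1/2 := hyc
      linarith [hρf_pos c.1]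
    have hy'c : dm e u c.1 y' < ρf c.1 := by
      have htr := dm_triangle e u c.1 y y'
      have : dm e u c.1 y < ρf c.1/2 := hyc
      linarith
    have e1 := hρf_spec c.1 c.2 y hy hyc'
    have e2 := hρf_spec c.1 c.2 y' hy' hy'c
    calc |g y - g y'| ≤ |g y - g c.1| + |g y' - g c.1| := by
          rw [abs_sub_comm (g y')]; exact abs_sub_le _ _ _
      _ ≤ η := by rw [abs_sub_comm (g y)] at e1 ⊢; linarith [e1, e2]
  · rw [Set.not_nonempty_iff_eq_empty] at hKne
    exact ⟨0, by simp [hKne]⟩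

lemma dm_net (he : Topology.IsEmbedding e) [CompactSpace Y] (u : ℕ → T) (Q : ℕ → Y)
    (m : ℕ) :
    ∃ N : ℕ, ∀ y ∈ closure (Set.range Q), ∃ i < N, dm e u (Q i) y < (1:ℝ)/(m+1) := by
  set K := closure (Set.range Q) with hKdef
  have hK : IsCompact K := isClosed_closure.isCompact
  have hcover : K ⊆ ⋃ i : ℕ, {y | dm e u (Q i) y < (1:ℝ)/(m+1)} := by
    intro y hy
    have hball : IsOpen {y' | dm e u y y' < (1:ℝ)/(m+1)} :=
      isOpen_lt (dm_cont_right e he.continuous u y) continuous_const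
    have hmem : y ∈ {y' | dm e u y y' < (1:ℝ)/(m+1)} := by
      simp only [Set.mem_setOf_eq, dm_self]
      positivity
    rw [hKdef, mem_closure_iff] at hy
    obtain ⟨q, hq1, hq2⟩ := hy _ hball hmem
    obtain ⟨i, rfl⟩ := hq2
    exact Set.mem_iUnion.2 ⟨i, by rwa [Set.mem_setOf_eq, dm_symm]⟩
  obtain ⟨tf, htf⟩ := hK.elim_finite_subcover _
    (fun i : ℕ => isOpen_lt (dm_cont_right e he.continuous u (Q i)) continuous_const) hcover
  refine ⟨tf.sup id + 1, ?_⟩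
  intro y hy
  have := htf hy
  rw [Set.mem_iUnion₂] at this
  obtain ⟨i, hit, hi⟩ := this
  exact ⟨i, Nat.lt_succ_of_le (Finset.le_sup (f := id) hit), hi⟩

end Dmetric
end

noncomputable section
namespace Engine
open scoped Classical

variable {X : Type*} [TopologicalSpace X] [BaireSpace X]

lemma baire_piece {V : Set X} (hV : IsOpen V) (hVne : V.Nonempty)
    (C : ℕ → Set X) (hsub : ∀ k, C k ⊆ V) (hcover : V ⊆ ⋃ k, C k) :
    ∃ (k : ℕ) (H : Set X), IsOpen H ∧ H.Nonempty ∧ H ⊆ V ∧ H ⊆ closure (C k) := by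
  by_contra hcon
  push_neg at hcon
  have hdense : ∀ k, Dense (closure (C k))ᶜ := by
    intro k
    rw [dense_iff_inter_open]
    intro H hH hHne
    by_contra hemp
    rw [Set.not_nonempty_iff_eq_empty] at hemp
    have hsubc : H ⊆ closure (C k) := by
      intro x hx
      by_contra hx'
      exact Set.eq_empty_iff_forall_notMem.1 hemp x ⟨hx, hx'⟩
    have hHV : (H ∩ V).Nonempty := by
      have h1 : H ⊆ closure V := hsubc.trans (closure_mono (hsub k))
      obtain ⟨x, hx⟩ := hHne
      have h2 := h1 hx
      rw [mem_closure_iff] at h2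
      exact h2 H hH hx
    exact hcon k (H ∩ V) (hH.inter hV) hHV Set.inter_subset_right
      (fun x hx => hsubc hx.1)
  have hdi := dense_iInter_of_isOpen (fun k => isClosed_closure.isOpen_compl) hdense
  obtain ⟨x, hxI, hxV⟩ := hdi.exists_mem_open hV hVne
  have hxC := hcover hxV
  rw [Set.mem_iUnion] at hxC
  obtain ⟨k, hk⟩ := hxC
  exact (Set.mem_iInter.1 hxI k) (subset_closure hk)

variable {Y T : Type*} [TopologicalSpace Y] [CompactSpace Y]

lemma engine (e : Y → T → ℝ) (he : Topology.IsEmbedding e)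
    (f : X × Y → ℝ) (B : Set Y)
    (hf2 : ∀ x : X, Continuous fun y => f (x, y))
    (hBqc : ∀ b ∈ B, QuasiContinuous fun x : X => f (x, b))
    {V : Set X} (hV : IsOpen V) (hVne : V.Nonempty)
    (Q : ℕ → Y) (hQB : ∀ n, Q n ∈ B)
    (u : ℕ → T) (hQu : ∀ n t, e (Q n) t ≠ 0 → ∃ i, u i = t)
    {ε₂ : ℝ} (hε₂ : 0 < ε₂) :
    ∃ (H : Set X) (x₀ : X), IsOpen H ∧ H.Nonempty ∧ H ⊆ V ∧ x₀ ∈ H ∧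
      ∀ x ∈ H, ∀ y ∈ closure (Set.range Q), |f (x, y) - f (x₀, y)| ≤ ε₂ := by
  classical
  set K := closure (Set.range Q) with hKdef
  have hK : IsCompact K := isClosed_closure.isCompact
  have hKsupp : ∀ y ∈ K, ∀ t, (∀ i, u i ≠ t) → e y t = 0 := by
    intro y hy t ht
    refine NamiokaCorson.closure_support (A := Set.range Q) (S := {t' | ∃ i, u i = t'})
      he.continuous ?_ y hy t ?_
    · rintro a ⟨n, rfl⟩ t' ht'
      by_contra h0
      exact ht' (hQu n t' h0)
    · rintro ⟨i, hi⟩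
      exact ht i hi
  have hmod : ∀ x : X, ∃ m : ℕ, ∀ y ∈ K, ∀ y' ∈ K,
      Dmetric.dm e u y y' ≤ (1:ℝ)/(m+1) → |f (x,y) - f (x,y')| ≤ ε₂/8 :=
    fun x => Dmetric.dm_unif_mod e he u hK hKsupp (fun y => f (x,y)) (hf2 x) (by positivity)
  choose Nf hNf using fun m => Dmetric.dm_net e he u Q m
  set CL : ℕ × List ℚ → Set X := fun p =>
    {x | x ∈ V ∧ (∀ y ∈ K, ∀ y' ∈ K, Dmetric.dm e u y y' ≤ (1:ℝ)/(p.1+1) →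
        |f (x,y) - f (x,y')| ≤ ε₂/8)
      ∧ ∀ i < Nf p.1, |f (x, Q i) - (p.2.getD i 0 : ℝ)| ≤ ε₂/8} with hCL
  set C : ℕ → Set X := fun n =>
    (Encodable.decode (α := ℕ × List ℚ) n).elim (∅ : Set X) CL with hC
  have hCsub : ∀ k, C k ⊆ V := by
    intro k
    have : C k = (Encodable.decode (α := ℕ × List ℚ) k).elim (∅ : Set X) CL := rfl
    rw [this]
    cases Encodable.decode (α := ℕ × List ℚ) k with
    | none => exact Set.empty_subset _
    | some p => exact fun x hx => hx.1
  have hCcover : V ⊆ ⋃ k, C k := by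
    intro x hxV
    obtain ⟨m, hm⟩ := hmod x
    have happrox : ∀ i : ℕ, ∃ q : ℚ, |f (x, Q i) - q| < ε₂/16 :=
      fun i => exists_rat_near _ (by positivity)
    choose ctr hctr using happrox
    set l : List ℚ := List.ofFn (fun i : Fin (Nf m) => ctr i) with hl
    have hgetD : ∀ i, i < Nf m → l.getD i 0 = ctr i := by
      intro i hi
      have hi' : i < l.length := by rw [List.length_ofFn]; exact hi
      rw [List.getD_eq_getElem l 0 hi']
      simp only [hl, List.getElem_ofFn]
    have hxCL : x ∈ CL (m, l) := by
      refine ⟨hxV, hm, ?_⟩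
      intro i hi
      rw [hgetD i hi]
      exact le_of_lt (lt_of_lt_of_le (hctr i) (by linarith))
    refine Set.mem_iUnion.2 ⟨Encodable.encode (m, l), ?_⟩
    have : C (Encodable.encode (m, l)) = CL (m, l) := by
      have h1 : C (Encodable.encode (m, l))
          = (Encodable.decode (α := ℕ × List ℚ) (Encodable.encode (m, l))).elim (∅ : Set X) CL := rfl
      rw [h1, Encodable.encodek]
      rfl
    rw [this]
    exact hxCL
  obtain ⟨k, H, hHopen, hHne, hHV, hHcl⟩ := baire_piece hV hVne C hCsub hCcover
  have hCk : C k = (Encodable.decode (α := ℕ × List ℚ) k).elim (∅ : Set X) CL := rfl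
  rcases hdec : Encodable.decode (α := ℕ × List ℚ) k with - | p
  · exfalso
    rw [hCk, hdec] at hHcl
    obtain ⟨x, hx⟩ := hHne
    simpa using hHcl hx
  · rw [hCk, hdec] at hHcl
    have hpin : ∀ x ∈ CL p, ∀ x' ∈ CL p, ∀ y ∈ K, |f (x,y) - f (x',y)| ≤ ε₂/2 := by
      intro x hx x' hx' y hy
      obtain ⟨i, hiN, hid⟩ := hNf p.1 y hy
      have hQiK : Q i ∈ K := subset_closure ⟨i, rfl⟩
      have hd : Dmetric.dm e u y (Q i) ≤ (1:ℝ)/(p.1+1) := by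
        rw [Dmetric.dm_symm]; exact le_of_lt hid
      have h1 := hx.2.1 y hy (Q i) hQiK hd
      have h2 := hx'.2.1 y hy (Q i) hQiK hd
      have h3 := hx.2.2 i hiN
      have h4 := hx'.2.2 i hiN
      have c1 : |f (x,y) - f (x',y)| ≤
          |f (x,y) - f (x,Q i)| + |f (x,Q i) - (p.2.getD i 0 : ℝ)|
          + |(p.2.getD i 0 : ℝ) - f (x',Q i)| + |f (x',Q i) - f (x',y)| := by
        have t1 : |f (x,y) - f (x',y)| ≤ |f (x,y) - f (x,Q i)| + |f (x,Q i) - f (x',y)| :=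
          abs_sub_le _ _ _
        have t2 : |f (x,Q i) - f (x',y)| ≤ |f (x,Q i) - f (x',Q i)| + |f (x',Q i) - f (x',y)| :=
          abs_sub_le _ _ _
        have t3 : |f (x,Q i) - f (x',Q i)| ≤
            |f (x,Q i) - (p.2.getD i 0 : ℝ)| + |(p.2.getD i 0 : ℝ) - f (x',Q i)| :=
          abs_sub_le _ _ _
        linarith
      rw [abs_sub_comm ((p.2.getD i 0 : ℝ)), abs_sub_comm (f (x', Q i)) (f (x', y))] at c1
      linarith
    have hHC : ∀ (G : Set X), IsOpen G → G.Nonempty → G ⊆ H → (G ∩ CL p).Nonempty := by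
      intro G hG hGne hGH
      obtain ⟨g, hg⟩ := hGne
      have h2 := hHcl (hGH hg)
      rw [mem_closure_iff] at h2
      exact h2 G hG hg
    obtain ⟨x₀, hx₀H, hx₀C⟩ := hHC H hHopen hHne subset_rfl
    have htransport : ∀ x ∈ H, ∀ j : ℕ, |f (x, Q j) - f (x₀, Q j)| ≤ ε₂/2 := by
      intro x hx j
      have : ∀ δ > (0:ℝ), |f (x, Q j) - f (x₀, Q j)| ≤ ε₂/2 + δ := by
        intro δ hδ
        obtain ⟨G, hGopen, hGne, hGH, hGim⟩ := hBqc (Q j) (hQB j) x H (hHopen.mem_nhds hx)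
          (Metric.ball (f (x, Q j)) δ) (Metric.ball_mem_nhds _ hδ)
        obtain ⟨x'', hx''G, hx''C⟩ := hHC G hGopen hGne hGH
        have h1 : |f (x'', Q j) - f (x, Q j)| < δ := by
          have := hGim ⟨x'', hx''G, rfl⟩
          rwa [Metric.mem_ball, Real.dist_eq] at this
        have hQjK : Q j ∈ K := subset_closure ⟨j, rfl⟩
        have h2 : |f (x'', Q j) - f (x₀, Q j)| ≤ ε₂/2 := hpin x'' hx''C x₀ hx₀C (Q j) hQjK
        have h3 : |f (x, Q j) - f (x₀, Q j)| ≤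
            |f (x, Q j) - f (x'', Q j)| + |f (x'', Q j) - f (x₀, Q j)| := abs_sub_le _ _ _
        rw [abs_sub_comm (f (x, Q j)) (f (x'', Q j))] at h3
        linarith
      exact le_of_forall_pos_le_add this
    refine ⟨H, x₀, hHopen, hHne, hHV, hx₀H, ?_⟩
    intro x hx y hy
    have hclosed : IsClosed {y' : Y | |f (x,y') - f (x₀,y')| ≤ ε₂} :=
      isClosed_le (continuous_abs.comp (((hf2 x).sub (hf2 x₀)))) continuous_const
    refine hclosed.closure_subset_iff.2 ?_ hy
    rintro y' ⟨j, rfl⟩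
    exact (htransport x hx j).trans (by linarith)

end Engine
end

noncomputable section
namespace LimitArg
open Filter Topology

variable {Y T : Type*} [TopologicalSpace Y] [CompactSpace Y]

lemma tend_of_pi (e : Y → T → ℝ) (he : Topology.IsEmbedding e) (τ : ℕ → T)
    {M : Set Y} (hMc : IsCompact M)
    (hMsupp : ∀ y ∈ M, ∀ t, (∀ i, τ i ≠ t) → e y t = 0)
    (seq : ℕ → Y) (hseq : ∀ n, seq n ∈ M) {z : Y} (hz : z ∈ M)
    (hπ : Tendsto (fun n => (fun i => e (seq n) (τ i))) atTop (𝓝 (fun i => e z (τ i)))) :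
    Tendsto seq atTop (𝓝 z) := by
  set π : Y → (ℕ → ℝ) := fun y i => e y (τ i) with hπdef
  have hπcont : Continuous π :=
    continuous_pi fun i => (continuous_apply (τ i)).comp he.continuous
  have hπinj : ∀ y ∈ M, ∀ y' ∈ M, π y = π y' → y = y' := by
    intro y hy y' hy' h
    apply he.injective
    funext t
    by_cases ht : ∃ i, τ i = t
    · obtain ⟨i, rfl⟩ := ht
      exact congrFun h i
    · push_neg at ht
      rw [hMsupp y hy t ht, hMsupp y' hy' t ht]
  by_contra hnot
  rw [Filter.not_tendsto_iff_exists_frequently_notMem] at hnot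
  obtain ⟨O, hOnhds, hfreq⟩ := hnot
  obtain ⟨O', hO'sub, hO'open, hzO'⟩ := mem_nhds_iff.1 hOnhds
  have hfreq' : ∃ᶠ n in atTop, seq n ∉ O' := hfreq.mono (fun n hn hn' => hn (hO'sub hn'))
  obtain ⟨ψ, hψmono, hψ⟩ := Filter.extraction_of_frequently_atTop hfreq'
  set F : Filter Y := Filter.map (fun j => seq (ψ j)) atTop with hF
  have hFneBot : F.NeBot := Filter.map_neBot
  have hFM : F ≤ Filter.principal M := by
    rw [hF, Filter.le_principal_iff, Filter.mem_map]
    exact Filter.Eventually.of_forall (fun j => hseq (ψ j))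
  obtain ⟨a, haM, hacl⟩ := hMc.exists_clusterPt hFM
  have hmapT : Tendsto (fun j => π (seq (ψ j))) atTop (𝓝 (π z)) :=
    hπ.comp hψmono.tendsto_atTop
  have hmaple : Filter.map π F ≤ 𝓝 (π z) := by
    rw [hF, Filter.map_map]
    exact hmapT
  have h1 : ClusterPt (π a) (Filter.map π F) :=
    hacl.map hπcont.continuousAt Filter.tendsto_map
  have h2 : (𝓝 (π a) ⊓ 𝓝 (π z)).NeBot := h1.mono hmaple
  have haz : a = z := hπinj a haM z hz (eq_of_nhds_neBot h2)
  have hFO : F ≤ Filter.principal O'ᶜ := by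
    rw [hF, Filter.le_principal_iff, Filter.mem_map]
    exact Filter.Eventually.of_forall (fun j => hψ j)
  have haO : a ∈ closure O'ᶜ := mem_closure_iff_clusterPt.2 (hacl.mono hFO)
  rw [hO'open.isClosed_compl.closure_eq] at haO
  exact haO (haz ▸ hzO')

lemma limit_contra (e : Y → T → ℝ) (he : Topology.IsEmbedding e) (τ : ℕ → T)
    (g : Y → ℝ) (hg : Continuous g)
    (bs ks : ℕ → Y) {εB : ℝ} (hεB : 0 < εB)
    (h1 : ∀ n, εB/4 ≤ |g (bs n) - g (ks n)|)
    (h2 : ∀ n t, e (bs n) t ≠ 0 → ∃ i, τ i = t)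
    (h2' : ∀ n t, e (ks n) t ≠ 0 → ∃ i, τ i = t)
    (h3 : ∀ i, Tendsto (fun n => e (bs n) (τ i) - e (ks n) (τ i)) atTop (𝓝 0)) :
    False := by
  set M : Set Y := closure (Set.range bs ∪ Set.range ks) with hM
  have hMc : IsCompact M := isClosed_closure.isCompact
  have hMsupp : ∀ y ∈ M, ∀ t, (∀ i, τ i ≠ t) → e y t = 0 := by
    intro y hy t ht
    refine NamiokaCorson.closure_support (A := Set.range bs ∪ Set.range ks)
      (S := {t' | ∃ i, τ i = t'}) he.continuous ?_ y hy t ?_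
    · rintro a (⟨n, rfl⟩ | ⟨n, rfl⟩) t' ht'
      · by_contra h0
        exact ht' (h2 n t' h0)
      · by_contra h0
        exact ht' (h2' n t' h0)
    · rintro ⟨i, hi⟩
      exact ht i hi
  set π : Y → (ℕ → ℝ) := fun y i => e y (τ i) with hπdef
  have hπcont : Continuous π :=
    continuous_pi fun i => (continuous_apply (τ i)).comp he.continuous
  have hbsM : ∀ n, bs n ∈ M := fun n => subset_closure (Or.inl ⟨n, rfl⟩)
  have hksM : ∀ n, ks n ∈ M := fun n => subset_closure (Or.inr ⟨n, rfl⟩)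
  have hπMc : IsCompact (π '' M) := hMc.image hπcont
  have hseqc : IsSeqCompact (π '' M) := hπMc.isSeqCompact
  obtain ⟨w, hwπM, φ, hφmono, hφtend⟩ := hseqc (x := fun n => π (bs n))
    (fun n => ⟨bs n, hbsM n, rfl⟩)
  obtain ⟨z, hzM, hzw⟩ := hwπM
  rw [← hzw] at hφtend
  have hbs_tend : Tendsto (fun j => bs (φ j)) atTop (𝓝 z) :=
    tend_of_pi e he τ hMc hMsupp _ (fun j => hbsM (φ j)) hzM hφtend
  have hks_π : Tendsto (fun j => π (ks (φ j))) atTop (𝓝 (π z)) := by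
    rw [tendsto_pi_nhds]
    intro i
    have ha : Tendsto (fun j => e (bs (φ j)) (τ i)) atTop (𝓝 (π z i)) :=
      (tendsto_pi_nhds.1 hφtend) i
    have hb : Tendsto (fun j => e (bs (φ j)) (τ i) - e (ks (φ j)) (τ i)) atTop (𝓝 0) :=
      (h3 i).comp hφmono.tendsto_atTop
    have := ha.sub hb
    simpa using this
  have hks_tend : Tendsto (fun j => ks (φ j)) atTop (𝓝 z) :=
    tend_of_pi e he τ hMc hMsupp _ (fun j => hksM (φ j)) hzM hks_π
  have hgb : Tendsto (fun j => g (bs (φ j))) atTop (𝓝 (g z)) :=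
    (hg.continuousAt.tendsto.comp hbs_tend)
  have hgk : Tendsto (fun j => g (ks (φ j))) atTop (𝓝 (g z)) :=
    (hg.continuousAt.tendsto.comp hks_tend)
  have hd : Tendsto (fun j => g (bs (φ j)) - g (ks (φ j))) atTop (𝓝 0) := by
    have := hgb.sub hgk
    simpa using this
  have habs : Tendsto (fun j => |g (bs (φ j)) - g (ks (φ j))|) atTop (𝓝 0) := by
    have := hd.abs
    simpa using this
  have hev := habs.eventually_lt_const (show (0:ℝ) < εB/4 by linarith)
  obtain ⟨j, hj⟩ := hev.exists
  exact absurd (h1 (φ j)) (not_le.2 hj)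

end LimitArg
end

noncomputable section
namespace MainArg
open scoped Classical
open Topology

structure Node (X Y T : Type*) where
  W : Set X
  S : ℕ → T
  Q : ℕ → Y
  x0 : X
  ens : ℕ → ℕ → T
  level : ℕ
  b : Y
  k : Y

variable {X Y T : Type*} [TopologicalSpace X] [BaireSpace X] [TopologicalSpace Y] [CompactSpace Y]

variable (e : Y → T → ℝ) (f : X × Y → ℝ) (B : Set Y) (εB : ℝ) (U₀ : Set X)

structure Inv (ν : Node X Y T) : Prop where
  open_ : IsOpen ν.W
  ne : ν.W.Nonempty
  subU : ν.W ⊆ U₀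
  QB : ∀ n, ν.Q n ∈ B
  Qsupp : ∀ n t, e (ν.Q n) t ≠ 0 → ∃ m, ν.S m = t
  adm : ∀ y : Y, ∃ kk : Y, ∀ t, e kk t = if ∃ m, ν.S m = t then e y t else 0
  capt : ∀ y : Y, (∀ t, (∀ m, ν.S m ≠ t) → e y t = 0) → y ∈ closure (Set.range ν.Q)
  pin : ∀ x ∈ ν.W, ∀ y ∈ closure (Set.range ν.Q), |f (x,y) - f (ν.x0,y)| ≤ εB/16
  ensS : ∀ m, m ≤ ν.level → ∀ i, ∃ m', ν.S m' = ν.ens m i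
  Sens : ∀ i, ∃ j, ν.ens ν.level j = ν.S i

structure Link (ν μ : Node X Y T) : Prop where
  lvl : μ.level = ν.level + 1
  Wsub : μ.W ⊆ ν.W
  Sgrow : ∀ m, ∃ m', μ.S m' = ν.S m
  ensEq : ∀ m, m ≤ ν.level → μ.ens m = ν.ens m
  bB : μ.b ∈ B
  bsupp : ∀ t, e μ.b t ≠ 0 → ∃ m, μ.S m = t
  ksupp : ∀ t, e μ.k t ≠ 0 → ∃ m, ν.S m = t
  sep : ∀ x ∈ μ.W, εB/4 ≤ |f (x, μ.b) - f (x, μ.k)|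
  cud : ∀ m i, m ≤ ν.level → i ≤ ν.level →
    |e μ.b (ν.ens m i) - e μ.k (ν.ens m i)| < 2 * (1/2 : ℝ)^ν.level

variable (he : Topology.IsEmbedding e)
  (hsupp : ∀ y : Y, {t : T | e y t ≠ 0}.Countable)
  (hf2 : ∀ x : X, Continuous fun y => f (x, y))
  (hBdense : Dense B)
  (hBqc : ∀ b ∈ B, QuasiContinuous fun x : X => f (x, b))
  (t0 : T) (y0 b0 : Y) (hb0 : b0 ∈ B)
  (hεB : 0 < εB)
  (hbad : ∀ x ∈ U₀, ∃ y : Y, ∀ (W : Set X) (O : Set Y), IsOpen W → IsOpen O → x ∈ W → y ∈ O →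
      ∃ p ∈ W ×ˢ O, εB < |f p - f (x, y)|)

include he hsupp hf2 hBdense hBqc t0 y0 hb0 hεB hbad in
lemma child_exists (ν : Node X Y T) (hν : Inv e f B εB U₀ ν)
    {V : Set X} (hVo : IsOpen V) (hVne : V.Nonempty) (hVsub : V ⊆ ν.W) :
    ∃ μ : Node X Y T, Inv e f B εB U₀ μ ∧ Link e f B εB ν μ ∧ μ.W ⊆ V := by
  classical
  obtain ⟨xs, hxsV⟩ := hVne
  have hxsU : xs ∈ U₀ := hν.subU (hVsub hxsV)
  obtain ⟨ys, hys⟩ := hbad xs hxsU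
  set r : ℝ := (1/2 : ℝ)^ν.level with hr
  have hrpos : 0 < r := by positivity
  set Ofin : Finset (ℕ × ℕ) := Finset.range (ν.level+1) ×ˢ Finset.range (ν.level+1) with hOfin
  set O : Set Y := ⋂ p ∈ (Ofin : Set (ℕ × ℕ)),
    {y | |e y (ν.ens p.1 p.2) - e ys (ν.ens p.1 p.2)| < r} with hO
  have hOopen : IsOpen O := by
    refine Set.Finite.isOpen_biInter Ofin.finite_toSet (fun p _ => ?_)
    exact isOpen_lt ((((continuous_apply (ν.ens p.1 p.2)).comp he.continuous).sub
      continuous_const).abs) continuous_const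
  have hOmem : ∀ y : Y, y ∈ O ↔ ∀ m i, m ≤ ν.level → i ≤ ν.level →
      |e y (ν.ens m i) - e ys (ν.ens m i)| < r := by
    intro y
    rw [hO]
    simp only [Set.mem_iInter, Finset.coe_product, Finset.mem_coe]
    constructor
    · intro h m i hm hi
      exact h (m, i) (Finset.mem_product.2 ⟨Finset.mem_range.2 (Nat.lt_succ_of_le hm),
        Finset.mem_range.2 (Nat.lt_succ_of_le hi)⟩)
    · intro h p hp
      obtain ⟨h1, h2⟩ := Finset.mem_product.1 hp
      exact h p.1 p.2 (Nat.lt_succ_iff.1 (Finset.mem_range.1 h1))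
        (Nat.lt_succ_iff.1 (Finset.mem_range.1 h2))
  have hysO : ys ∈ O := by
    rw [hOmem]
    intro m i _ _
    simpa using hrpos
  obtain ⟨kk, hkk⟩ := hν.adm ys
  have hkksupp : ∀ t, (∀ m, ν.S m ≠ t) → e kk t = 0 := by
    intro t ht
    rw [hkk t, if_neg]
    push_neg
    exact ht
  have hkkcl : kk ∈ closure (Set.range ν.Q) := hν.capt kk hkksupp
  set c : ℝ := f (ν.x0, kk) with hc
  have hpinkk : ∀ x ∈ ν.W, |f (x, kk) - c| ≤ εB/16 := fun x hx => hν.pin x hx kk hkkcl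
  -- dichotomy
  have hdich : ∃ (xt : X) (yt : Y), xt ∈ V ∧ yt ∈ O ∧ εB/2 < |f (xt, yt) - c| := by
    by_cases hcase : εB/2 < |f (xs, ys) - c|
    · exact ⟨xs, ys, hxsV, hysO, hcase⟩
    · push_neg at hcase
      obtain ⟨p, hpmem, hpfar⟩ := hys V O hVo hOopen hxsV hysO
      refine ⟨p.1, p.2, hpmem.1, hpmem.2, ?_⟩
      rw [Prod.mk.eta]
      have htr : |f p - f (xs, ys)| ≤ |f p - c| + |c - f (xs, ys)| := abs_sub_le _ _ _
      rw [abs_sub_comm c] at htr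
      linarith
  obtain ⟨xt, yt, hxtV, hytO, hsep⟩ := hdich
  set A : ℝ := f (xt, yt) with hA
  -- pick b
  set Ob : Set Y := O ∩ {y | |f (xt, y) - A| < εB/16} with hOb
  have hObopen : IsOpen Ob := hOopen.inter (isOpen_lt (((hf2 xt).sub continuous_const).abs)
    continuous_const)
  have hObne : yt ∈ Ob := ⟨hytO, by simp only [Set.mem_setOf_eq, hA, sub_self, abs_zero]; positivity⟩
  obtain ⟨b, hbB, hbOb⟩ := hBdense.exists_mem_open hObopen ⟨yt, hObne⟩
  -- quasicontinuity
  obtain ⟨G, hGo, hGne, hGV, hGim⟩ := hBqc b hbB xt V (hVo.mem_nhds hxtV)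
    (Metric.ball (f (xt, b)) (εB/16)) (Metric.ball_mem_nhds _ (by linarith))
  have hGb : ∀ x ∈ G, |f (x, b) - A| < εB/8 := by
    intro x hx
    have h1 : |f (x, b) - f (xt, b)| < εB/16 := by
      have := hGim ⟨x, hx, rfl⟩
      rwa [Metric.mem_ball, Real.dist_eq] at this
    have h2 : |f (xt, b) - A| < εB/16 := hbOb.2
    calc |f (x,b) - A| ≤ |f (x,b) - f (xt,b)| + |f (xt,b) - A| := abs_sub_le _ _ _
      _ < εB/8 := by linarith
  -- closing off
  set s0' : ℕ → T := fun n => if n % 2 = 0 then ν.S (n/2) else Close.σe e t0 hsupp b (n/2)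
    with hs0'
  have hs0S : ∀ i, s0' (2*i) = ν.S i := by
    intro i
    rw [hs0']
    have h1 : (2*i) % 2 = 0 := by omega
    have h2 : (2*i) / 2 = i := by omega
    simp [h1, h2]
  have hs0σ : ∀ j, s0' (2*j+1) = Close.σe e t0 hsupp b j := by
    intro j
    rw [hs0']
    have h1 : ¬((2*j+1) % 2 = 0) := by omega
    have h2 : (2*j+1) / 2 = j := by omega
    simp [h1, h2]
  obtain ⟨S', Q', hS'sup, hQ'B, hQ'supp, hadm', hcapt'⟩ :=
    Close.close e B t0 y0 b0 hsupp s0' he hBdense hb0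
  have hSgrow : ∀ m, ∃ m', S' m' = ν.S m := by
    intro m
    obtain ⟨m', hm'⟩ := hS'sup (2*m)
    exact ⟨m', by rw [hm', hs0S]⟩
  -- engine
  obtain ⟨H, x₀', hHo, hHne, hHG, hx₀'H, hpin'⟩ :=
    Engine.engine e he f B hf2 hBqc hGo hGne Q' hQ'B S' hQ'supp
      (ε₂ := εB/16) (by linarith)
  set μ : Node X Y T := ⟨H, S', Q', x₀',
    (fun m => if m ≤ ν.level then ν.ens m else S'), ν.level+1, b, kk⟩ with hμ
  have hHV : H ⊆ V := hHG.trans hGV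
  have hHW : H ⊆ ν.W := hHV.trans hVsub
  refine ⟨μ, ?_, ?_, hHV⟩
  · refine ⟨hHo, hHne, hHV.trans (hVsub.trans hν.subU), hQ'B, hQ'supp, hadm', hcapt',
      hpin', ?_, ?_⟩
    · intro m hm i
      rw [hμ]
      simp only
      by_cases hml : m ≤ ν.level
      · rw [if_pos hml]
        obtain ⟨m'', hm''⟩ := hν.ensS m hml i
        obtain ⟨m', hm'⟩ := hSgrow m''
        exact ⟨m', by rw [hm', hm'']⟩
      · rw [if_neg hml]
        exact ⟨i, rfl⟩
    · intro i
      rw [hμ]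
      simp only
      rw [if_neg (by omega)]
      exact ⟨i, rfl⟩
  · refine ⟨rfl, hHW, hSgrow, ?_, hbB, ?_, ?_, ?_, ?_⟩
    · intro m hm
      rw [hμ]
      simp only
      rw [if_pos hm]
    · intro t ht
      obtain ⟨j, hj⟩ := Close.σe_mem e t0 hsupp ht
      obtain ⟨m', hm'⟩ := hS'sup (2*j+1)
      refine ⟨m', ?_⟩
      show S' m' = t
      rw [hm', hs0σ, hj]
    · intro t ht
      rw [hkk t] at ht
      by_cases hex : ∃ m, ν.S m = t
      · exact hex
      · rw [if_neg hex] at ht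
        exact absurd rfl ht
    · intro x hx
      show εB/4 ≤ |f (x, b) - f (x, kk)|
      have h1 : |f (x, b) - A| < εB/8 := hGb x (hHG hx)
      have h2 : |f (x, kk) - c| ≤ εB/16 := hpinkk x (hHW hx)
      have h3 : |A - c| ≤ |A - f (x,b)| + |f (x,b) - f (x,kk)| + |f (x,kk) - c| := by
        have t1 : |A - c| ≤ |A - f (x,b)| + |f (x,b) - c| := abs_sub_le _ _ _
        have t2 : |f (x,b) - c| ≤ |f (x,b) - f (x,kk)| + |f (x,kk) - c| := abs_sub_le _ _ _
        linarith
      rw [abs_sub_comm A (f (x,b))] at h3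
      linarith
    · intro m i hm hi
      show |e b (ν.ens m i) - e kk (ν.ens m i)| < 2 * (1/2:ℝ)^ν.level
      rw [← hr]
      have hb1 : b ∈ O := hbOb.1
      rw [hOmem] at hb1
      have h1 := hb1 m i hm hi
      have h2 : e kk (ν.ens m i) = e ys (ν.ens m i) := by
        rw [hkk, if_pos]
        obtain ⟨m', hm'⟩ := hν.ensS m hm i
        exact ⟨m', hm'⟩
      rw [h2]
      calc |e b (ν.ens m i) - e ys (ν.ens m i)| < r := h1
        _ < 2 * r := by linarith

include he hsupp hf2 hBdense hBqc t0 y0 hb0 hεB in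
lemma root_exists (hU₀o : IsOpen U₀) (hU₀ne : U₀.Nonempty) :
    ∃ ρ : Node X Y T, Inv e f B εB U₀ ρ ∧ ρ.level = 0 := by
  classical
  obtain ⟨S₀, Q₀, hS₀sup, hQ₀B, hQ₀supp, hadm₀, hcapt₀⟩ :=
    Close.close e B t0 y0 b0 hsupp (fun _ => t0) he hBdense hb0
  obtain ⟨H, x₀, hHo, hHne, hHU, hx₀H, hpin₀⟩ :=
    Engine.engine e he f B hf2 hBqc hU₀o hU₀ne Q₀ hQ₀B S₀ hQ₀supp
      (ε₂ := εB/16) (by linarith)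
  refine ⟨⟨H, S₀, Q₀, x₀, fun _ => S₀, 0, y0, y0⟩, ⟨hHo, hHne, hHU, hQ₀B, hQ₀supp,
    hadm₀, hcapt₀, hpin₀, ?_, ?_⟩, rfl⟩
  · intro m _ i
    exact ⟨i, rfl⟩
  · intro i
    exact ⟨i, rfl⟩

include he hsupp hf2 hBdense hBqc t0 y0 hb0 hεB hbad in
lemma children_exist (ν : Node X Y T) (hν : Inv e f B εB U₀ ν) :
    ∃ 𝒞 : Set (Node X Y T),
      (∀ μ ∈ 𝒞, Inv e f B εB U₀ μ ∧ Link e f B εB ν μ) ∧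
      (∀ μ ∈ 𝒞, ∀ μ' ∈ 𝒞, μ ≠ μ' → μ.W ∩ μ'.W = ∅) ∧
      (∀ G : Set X, IsOpen G → G.Nonempty → G ⊆ ν.W → ∃ μ ∈ 𝒞, (μ.W ∩ G).Nonempty) := by
  classical
  set SS : Set (Set (Node X Y T)) := {A | (∀ μ ∈ A, Inv e f B εB U₀ μ ∧ Link e f B εB ν μ) ∧
    (∀ μ ∈ A, ∀ μ' ∈ A, μ ≠ μ' → μ.W ∩ μ'.W = ∅)} with hSS
  have hzorn : ∃ m, Maximal (fun A => A ∈ SS) m := by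
    apply zorn_subset
    intro c hcS hchain
    refine ⟨⋃₀ c, ⟨?_, ?_⟩, fun s hs => Set.subset_sUnion_of_mem hs⟩
    · rintro μ ⟨A, hAc, hμA⟩
      exact (hcS hAc).1 μ hμA
    · rintro μ ⟨A, hAc, hμA⟩ μ' ⟨A', hA'c, hμ'A'⟩ hne
      rcases hchain.total hAc hA'c with h | h
      · exact (hcS hA'c).2 μ (h hμA) μ' hμ'A' hne
      · exact (hcS hAc).2 μ hμA μ' (h hμ'A') hne
  obtain ⟨𝒞, h𝒞max⟩ := hzorn
  have h𝒞S : 𝒞 ∈ SS := h𝒞max.1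
  refine ⟨𝒞, h𝒞S.1, h𝒞S.2, ?_⟩
  intro G hGo hGne hGsub
  by_contra hnone
  push_neg at hnone
  have hnone' : ∀ μ ∈ 𝒞, μ.W ∩ G = ∅ := hnone
  obtain ⟨μ', hμ'Inv, hμ'Link, hμ'G⟩ :=
    child_exists e f B εB U₀ he hsupp hf2 hBdense hBqc t0 y0 b0 hb0 hεB hbad ν hν hGo hGne hGsub
  have hμ'ne : μ'.W.Nonempty := hμ'Inv.ne
  have hnew : insert μ' 𝒞 ∈ SS := by
    constructor
    · rintro μ (rfl | hμ)
      · exact ⟨hμ'Inv, hμ'Link⟩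
      · exact h𝒞S.1 μ hμ
    · rintro μ (rfl | hμ) μ'' (rfl | hμ'') hne
      · exact absurd rfl hne
      · rw [Set.inter_comm]
        rw [← Set.subset_empty_iff]
        intro x hx
        rw [← hnone' μ'' hμ'']
        exact ⟨hx.1, hμ'G hx.2⟩
      · rw [← Set.subset_empty_iff]
        intro x hx
        rw [← hnone' μ hμ]
        exact ⟨hx.1, hμ'G hx.2⟩
      · exact h𝒞S.2 μ hμ μ'' hμ'' hne
  have hsub : insert μ' 𝒞 ⊆ 𝒞 := h𝒞max.2 hnew (Set.subset_insert _ _)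
  have hμ'mem : μ' ∈ 𝒞 := hsub (Set.mem_insert _ _)
  obtain ⟨x, hx⟩ := hμ'ne
  have := hnone' μ' hμ'mem
  rw [Set.eq_empty_iff_forall_notMem] at this
  exact this x ⟨hx, hμ'G hx⟩

include he hsupp hf2 hBdense hBqc t0 y0 hb0 hεB hbad in
lemma master_contra (hU₀o : IsOpen U₀) (hU₀ne : U₀.Nonempty) : False := by
  classical
  obtain ⟨root, hrootInv, hrootlev⟩ :=
    root_exists e f B εB U₀ he hsupp hf2 hBdense hBqc t0 y0 b0 hb0 hεB hU₀o hU₀ne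
  have childfam := fun (ν : Node X Y T) (hν : Inv e f B εB U₀ ν) =>
    children_exist e f B εB U₀ he hsupp hf2 hBdense hBqc t0 y0 b0 hb0 hεB hbad ν hν
  choose! Cf hCf1 hCf2 hCf3 using childfam
  set L : ℕ → Set (Node X Y T) :=
    fun n => Nat.rec {root} (fun _ A => ⋃ ν ∈ A, Cf ν) n with hLdef
  have hL0 : L 0 = {root} := rfl
  have hLsucc : ∀ n, L (n+1) = ⋃ ν ∈ L n, Cf ν := fun n => rfl
  have hInvL : ∀ n, (∀ ν ∈ L n, Inv e f B εB U₀ ν ∧ ν.level = n ∧ ν.W ⊆ root.W) ∧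
      (∀ ν ∈ L n, ∀ ν' ∈ L n, ν ≠ ν' → ν.W ∩ ν'.W = ∅) := by
    intro n
    induction n with
    | zero =>
      constructor
      · intro ν hν
        rw [hL0, Set.mem_singleton_iff] at hν
        subst hν
        exact ⟨hrootInv, hrootlev, subset_rfl⟩
      · intro ν hν ν' hν' hne
        rw [hL0, Set.mem_singleton_iff] at hν hν'
        exact absurd (hν.trans hν'.symm) hne
    | succ n ih =>
      constructor
      · intro ν hν
        rw [hLsucc] at hν
        obtain ⟨p, hpL, hνp⟩ := Set.mem_iUnion₂.1 hν
        obtain ⟨hpInv, hplev, hpW⟩ := ih.1 p hpL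
        have hm := hCf1 p hpInv ν hνp
        exact ⟨hm.1, by rw [hm.2.lvl, hplev], hm.2.Wsub.trans hpW⟩
      · intro ν hν ν' hν' hne
        rw [hLsucc] at hν hν'
        obtain ⟨p, hpL, hνp⟩ := Set.mem_iUnion₂.1 hν
        obtain ⟨p', hp'L, hν'p'⟩ := Set.mem_iUnion₂.1 hν'
        by_cases hpp : p = p'
        · subst hpp
          exact hCf2 p (ih.1 p hpL).1 ν hνp ν' hν'p' hne
        · have hd := ih.2 p hpL p' hp'L hpp
          have h1 : ν.W ⊆ p.W := (hCf1 p (ih.1 p hpL).1 ν hνp).2.Wsub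
          have h2 : ν'.W ⊆ p'.W := (hCf1 p' (ih.1 p' hp'L).1 ν' hν'p').2.Wsub
          rw [← Set.subset_empty_iff]
          intro x hx
          rw [← hd]
          exact ⟨h1 hx.1, h2 hx.2⟩
  set D : ℕ → Set X := fun n => (⋃ ν ∈ L n, ν.W) ∪ (closure root.W)ᶜ with hD
  have hDo : ∀ n, IsOpen (D n) := by
    intro n
    exact (isOpen_biUnion (fun ν hν => ((hInvL n).1 ν hν).1.open_)).union
      isClosed_closure.isOpen_compl
  have hDd : ∀ n, Dense (D n) := by
    intro n
    rw [dense_iff_inter_open]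
    induction n with
    | zero =>
      intro H hHo hHne
      by_cases hsub : H ⊆ closure root.W
      · obtain ⟨x, hx⟩ := hHne
        have := hsub hx
        rw [mem_closure_iff] at this
        obtain ⟨z, hz1, hz2⟩ := this H hHo hx
        refine ⟨z, hz1, Or.inl ?_⟩
        rw [hL0]
        exact Set.mem_biUnion rfl hz2
      · obtain ⟨x, hxH, hxc⟩ := Set.not_subset.1 hsub
        exact ⟨x, hxH, Or.inr hxc⟩
    | succ n ih =>
      intro H hHo hHne
      obtain ⟨z, hzH, hzD⟩ := ih H hHo hHne
      rcases hzD with hz | hz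
      · obtain ⟨ν, hνL, hzν⟩ := Set.mem_iUnion₂.1 hz
        have hνInv := ((hInvL n).1 ν hνL).1
        have hGo : IsOpen (H ∩ ν.W) := hHo.inter hνInv.open_
        have hGne : (H ∩ ν.W).Nonempty := ⟨z, hzH, hzν⟩
        obtain ⟨μ, hμC, hμne⟩ := hCf3 ν hνInv (H ∩ ν.W) hGo hGne Set.inter_subset_right
        obtain ⟨w, hwμ, hwH, _⟩ := hμne
        refine ⟨w, hwH, Or.inl ?_⟩
        have hμL : μ ∈ L (n+1) := by
          rw [hLsucc]
          exact Set.mem_biUnion hνL hμC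
        exact Set.mem_biUnion hμL hwμ
      · exact ⟨z, hzH, Or.inr hz⟩
  have hdense : Dense (⋂ n, D n) := dense_iInter_of_isOpen hDo hDd
  obtain ⟨xI, hxII, hxIW⟩ := hdense.exists_mem_open hrootInv.open_ hrootInv.ne
  have hbr : ∀ n, ∃ ν, ν ∈ L n ∧ xI ∈ ν.W := by
    intro n
    have hxD := Set.mem_iInter.1 hxII n
    rcases hxD with hx | hx
    · obtain ⟨ν, hνL, hxν⟩ := Set.mem_iUnion₂.1 hx
      exact ⟨ν, hνL, hxν⟩
    · exact absurd (subset_closure hxIW) hx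
  choose νb hνbL hνbW using hbr
  have hInvb : ∀ n, Inv e f B εB U₀ (νb n) := fun n => ((hInvL n).1 _ (hνbL n)).1
  have hlev : ∀ n, (νb n).level = n := fun n => ((hInvL n).1 _ (hνbL n)).2.1
  have hlink : ∀ n, Link e f B εB (νb n) (νb (n+1)) := by
    intro n
    have h := hνbL (n+1)
    rw [hLsucc] at h
    obtain ⟨p, hpL, hmem⟩ := Set.mem_iUnion₂.1 h
    have hpInv := ((hInvL n).1 p hpL).1
    have hlink' := (hCf1 p hpInv _ hmem).2
    have hpeq : p = νb n := by
      by_contra hne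
      have hdisj := (hInvL n).2 p hpL (νb n) (hνbL n) hne
      have hxp : xI ∈ p.W := hlink'.Wsub (hνbW (n+1))
      rw [Set.eq_empty_iff_forall_notMem] at hdisj
      exact hdisj xI ⟨hxp, hνbW n⟩
    rwa [hpeq] at hlink'
  have hensEq : ∀ m n, m ≤ n → (νb n).ens m = (νb m).ens m := by
    intro m n hmn
    induction hmn with
    | refl => rfl
    | @step n' h ih =>
      rw [← ih]
      exact (hlink n').ensEq m (by rw [hlev]; exact h)
  have hSgrowb : ∀ n n', n ≤ n' → ∀ i, ∃ j, (νb n').S j = (νb n).S i := by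
    intro n n' hnn'
    induction hnn' with
    | refl => exact fun i => ⟨i, rfl⟩
    | @step n'' h ih =>
      intro i
      obtain ⟨j, hj⟩ := ih i
      obtain ⟨j', hj'⟩ := (hlink n'').Sgrow j
      exact ⟨j', by rw [hj', hj]⟩
  set τ : ℕ → T := fun c => (νb c.unpair.1).ens c.unpair.1 c.unpair.2 with hτdef
  have hτS : ∀ n t, (∃ i, (νb n).S i = t) → ∃ c, τ c = t := by
    rintro n t ⟨i, hi⟩
    obtain ⟨j, hj⟩ := (hInvb n).Sens i
    rw [hlev n] at hj
    refine ⟨Nat.pair n j, ?_⟩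
    rw [hτdef]
    simp only [Nat.unpair_pair]
    rw [hj, hi]
  set bs : ℕ → Y := fun n => (νb (n+1)).b with hbs
  set ks : ℕ → Y := fun n => (νb (n+1)).k with hks
  have h1 : ∀ n, εB/4 ≤ |f (xI, bs n) - f (xI, ks n)| :=
    fun n => (hlink n).sep xI (hνbW (n+1))
  have h2 : ∀ n t, e (bs n) t ≠ 0 → ∃ c, τ c = t := by
    intro n t ht
    exact hτS (n+1) t ((hlink n).bsupp t ht)
  have h2' : ∀ n t, e (ks n) t ≠ 0 → ∃ c, τ c = t := by
    intro n t ht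
    exact hτS n t ((hlink n).ksupp t ht)
  have h3 : ∀ c, Filter.Tendsto (fun n => e (bs n) (τ c) - e (ks n) (τ c))
      Filter.atTop (𝓝 0) := by
    intro c
    set mh := c.unpair.1 with hmh
    set jh := c.unpair.2 with hjh
    apply squeeze_zero_norm' (a := fun n => 2 * (1/2 : ℝ)^n)
    · rw [Filter.eventually_atTop]
      refine ⟨max mh jh, ?_⟩
      intro n hn
      have hmhn : mh ≤ n := le_trans (le_max_left _ _) hn
      have hjhn : jh ≤ n := le_trans (le_max_right _ _) hn
      have hcud := (hlink n).cud mh jh (by rw [hlev]; exact hmhn) (by rw [hlev]; exact hjhn)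
      rw [hlev n] at hcud
      have heq : (νb n).ens mh jh = τ c := by
        rw [hτdef]
        simp only []
        rw [← hmh, ← hjh]
        rw [hensEq mh n hmhn]
      rw [heq] at hcud
      rw [Real.norm_eq_abs]
      exact le_of_lt hcud
    · have hg : Filter.Tendsto (fun n : ℕ => (1/2 : ℝ)^n) Filter.atTop (𝓝 0) :=
        tendsto_pow_atTop_nhds_zero_of_lt_one (by norm_num) (by norm_num)
      have := hg.const_mul (2 : ℝ)
      simpa using this
  exact LimitArg.limit_contra e he τ (fun y => f (xI, y)) (hf2 xI) bs ks hεB h1 h2 h2' h3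

include he hsupp hf2 hBdense hBqc in
lemma good_dense (hT : Nonempty T) (hY : Nonempty Y) {ε : ℝ} (hε : 0 < ε) :
    Dense {x : X | NamiokaCorson.Good f ε x} := by
  classical
  rw [dense_iff_inter_open]
  intro U hUo hUne
  by_contra hemp
  rw [Set.not_nonempty_iff_eq_empty] at hemp
  have hbad0 : ∀ x ∈ U, ¬ NamiokaCorson.Good f ε x := by
    intro x hx hg
    rw [Set.eq_empty_iff_forall_notMem] at hemp
    exact hemp x ⟨hx, hg⟩
  have hbad : ∀ x ∈ U, ∃ y : Y, ∀ (W : Set X) (O : Set Y), IsOpen W → IsOpen O → x ∈ W → y ∈ O →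
      ∃ p ∈ W ×ˢ O, ε/2 < |f p - f (x, y)| := by
    intro x hx
    have hng := hbad0 x hx
    rw [NamiokaCorson.Good] at hng
    push_neg at hng
    obtain ⟨y, hy⟩ := hng
    refine ⟨y, ?_⟩
    intro W O hWo hOo hxW hyO
    obtain ⟨p, hp, q, hq, hpq⟩ := hy W O hWo hOo hxW hyO
    by_cases hc : ε/2 < |f p - f (x, y)|
    · exact ⟨p, hp, hc⟩
    · push_neg at hc
      refine ⟨q, hq, ?_⟩
      have htr : |f p - f q| ≤ |f p - f (x,y)| + |f (x,y) - f q| := abs_sub_le _ _ _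
      rw [abs_sub_comm (f (x,y))] at htr
      linarith
  obtain ⟨y00⟩ := hY
  obtain ⟨b0, hb0, -⟩ := hBdense.exists_mem_open isOpen_univ ⟨y00, trivial⟩
  exact master_contra e f B (ε/2) U he hsupp hf2 hBdense hBqc hT.some y00 b0 hb0
    (by linarith) hbad hUo hUne

end MainArg
end

/-- Corollary 3.3: if `Y` is a Corson compact then every `f : X × Y → ℝ`
continuous in the second variable with quasi-continuous sections `f_b` for `b` in a dense set
has the Namioka property. -/
theorem namioka_of_corson {X Y T : Type*} [TopologicalSpace X] [BaireSpace X]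
    [TopologicalSpace Y] [CompactSpace Y]
    (e : Y → (T → ℝ)) (he : Topology.IsEmbedding e)
    (hcube : ∀ y t, e y t ∈ Set.Icc (0 : ℝ) 1)
    (hsupp : ∀ y, {t : T | e y t ≠ 0}.Countable)
    (f : X × Y → ℝ)
    (hf2 : ∀ x : X, Continuous fun y => f (x, y))
    (B : Set Y) (hBdense : Dense B)
    (hBqc : ∀ b ∈ B, QuasiContinuous fun x : X => f (x, b)) :
    NamiokaProperty f := by

  classical
  by_cases hYe : IsEmpty Y
  · exact ⟨Set.univ, dense_univ, IsGδ.univ, fun x _ y => (hYe.false y).elim⟩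
  rw [not_isEmpty_iff] at hYe
  by_cases hTe : IsEmpty T
  · have hsubs : Subsingleton Y :=
      ⟨fun a b => he.injective (funext fun t => (hTe.false t).elim)⟩
    obtain ⟨y00⟩ := hYe
    obtain ⟨b0, hb0, -⟩ := hBdense.exists_mem_open isOpen_univ ⟨y00, trivial⟩
    obtain ⟨A, hAd, hAG, hAc⟩ := NamiokaCorson.qc_dense_gdelta (fun x => f (x, b0)) (hBqc b0 hb0)
    refine ⟨A, hAd, hAG, ?_⟩
    intro x hx y
    have hfy : f = (fun x : X => f (x, b0)) ∘ Prod.fst := by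
      funext p
      simp only [Function.comp_apply]
      congr 1
      exact Prod.ext rfl (Subsingleton.elim _ _)
    rw [hfy]
    exact (hAc x hx).comp continuous_fst.continuousAt
  rw [not_isEmpty_iff] at hTe
  refine ⟨⋂ n : ℕ, {x | NamiokaCorson.Good f ((1:ℝ)/(n+1)) x}, ?_, ?_, ?_⟩
  · refine dense_iInter_of_isOpen (fun n => NamiokaCorson.isOpen_good f _) (fun n => ?_)
    exact MainArg.good_dense e f B he hsupp hf2 hBdense hBqc hTe hYe (by positivity)
  · exact IsGδ.iInter fun n => (NamiokaCorson.isOpen_good f _).isGδ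
  · intro x hx y
    apply NamiokaCorson.good_continuousAt
    intro ε' hε'
    obtain ⟨n, hn⟩ := exists_nat_gt (1/ε')
    have hle : (1:ℝ)/(n+1) ≤ ε' := by
      rw [div_le_iff₀ (by positivity)]
      rw [div_lt_iff₀ hε'] at hn
      nlinarith
    exact NamiokaCorson.good_mono f hle (Set.mem_iInter.1 hx n)
end
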